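/- arXiv:2101.12493 — 5 statements merged into one kernel-verified Lean document; each statement's English description precedes it below -/
import Mathlib

section
/- Consider a decoupled system with block-diagonal A = blockdiag(A₁,…,A_N), P = blockdiag(P₁,…,P_N) (each Pᵢ symmetric positive definite), sensor output matrices Cᵢ = [0 … C_{i0} … 0], noise covariances Rᵢ ≻ 0, and process-noise covariance Q. For each power allocation u from a finite action set, let γ(u) = (γ₁(u),…,γ_N(u)) be a {0,1}-valued random vector with marginals pᵢ(u) = E[γᵢ(u)], and define the one-step-ahead expected cost C(P,u) = E[Tr(A (P⁻¹ + Σᵢ γᵢ(u) Cᵢᵀ Rᵢ⁻¹ Cᵢ)⁻¹ Aᵀ)] + Tr(Q) + μ Σᵢ [u]ᵢ with μ ≥ 0. Then for any two actions u and v, C(P,u) < C(P,v) if and only if Σᵢ ψᵢ(Pᵢ) pᵢ(u) − μ Σᵢ [u]ᵢ > Σᵢ ψᵢ(Pᵢ) pᵢ(v) − μ Σᵢ [v]ᵢ, where ψᵢ(Pᵢ) = Tr(Aᵢ Pᵢ C_{i0}ᵀ (C_{i0} Pᵢ C_{i0}ᵀ + Rᵢ)⁻¹ C_{i0} Pᵢ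 Aᵢᵀ). -/
open Matrix MeasureTheory

/-- Inverse of a block diagonal matrix with invertible blocks. -/
lemma blockDiagonal'_inv_eq {N : ℕ} {nd : Fin N → ℕ}
    (M : ∀ i, Matrix (Fin (nd i)) (Fin (nd i)) ℝ) (hM : ∀ i, IsUnit (M i)) :
    (Matrix.blockDiagonal' M)⁻¹ = Matrix.blockDiagonal' (fun i => (M i)⁻¹) := by
  apply Matrix.inv_eq_right_inv
  rw [← Matrix.blockDiagonal'_mul]
  rw [show (fun i => M i * (M i)⁻¹) = fun _ => 1 from funext fun i =>
    Matrix.mul_nonsing_inv _ ((Matrix.isUnit_iff_isUnit_det _).1 (hM i))]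
  exact Matrix.blockDiagonal'_one

/-- Woodbury for PosDef matrices. -/
lemma woodbury_posdef {n m : ℕ} {P : Matrix (Fin n) (Fin n) ℝ} (hP : P.PosDef)
    {R : Matrix (Fin m) (Fin m) ℝ} (hR : R.PosDef) (C0 : Matrix (Fin m) (Fin n) ℝ) :
    (P⁻¹ + C0ᵀ * R⁻¹ * C0)⁻¹ = P - P * C0ᵀ * (C0 * P * C0ᵀ + R)⁻¹ * C0 * P := by
  have hPinv : P⁻¹⁻¹ = P := Matrix.nonsing_inv_nonsing_inv _ ((Matrix.isUnit_iff_isUnit_det _).1 hP.isUnit)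
  have hRinv : R⁻¹⁻¹ = R := Matrix.nonsing_inv_nonsing_inv _ ((Matrix.isUnit_iff_isUnit_det _).1 hR.isUnit)
  have hCPC : (C0 * P * C0ᵀ + R).PosDef := by
    have h1 : (C0 * P * C0ᵀ).PosSemidef := by
      have := hP.posSemidef.mul_mul_conjTranspose_same C0
      rwa [Matrix.conjTranspose_eq_transpose_of_trivial] at this
    exact Matrix.PosDef.posSemidef_add h1 hR
  have hAC : IsUnit ((R⁻¹)⁻¹ + C0 * P⁻¹⁻¹ * C0ᵀ) := by
    rw [hPinv, hRinv, add_comm]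
    exact hCPC.isUnit
  have := Matrix.add_mul_mul_inv_eq_sub P⁻¹ C0ᵀ R⁻¹ C0 hP.inv.isUnit hR.inv.isUnit hAC
  rw [this, hPinv, hRinv, add_comm R]

lemma sensor_block {N : ℕ} {ndim : Fin N → ℕ} {mi : ℕ} (i : Fin N)
    (C : Matrix (Fin mi) (Σ j, Fin (ndim j)) ℝ)
    (C0 : Matrix (Fin mi) (Fin (ndim i)) ℝ)
    (hC : ∀ (r : Fin mi) (j : Fin N) (c : Fin (ndim j)),
      C r ⟨j, c⟩ = if h : j = i then C0 r (h ▸ c) else 0)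
    (M : Matrix (Fin mi) (Fin mi) ℝ) :
    Cᵀ * M * C = Matrix.blockDiagonal' (Pi.single i (C0ᵀ * M * C0)) := by
  ext ⟨j, c⟩ ⟨k, d⟩
  rcases eq_or_ne j i with rfl | hj
  · rcases eq_or_ne k j with rfl | hk
    · simp [Matrix.mul_apply, hC, Finset.sum_mul]
    · rw [Matrix.blockDiagonal'_apply_ne _ _ _ (Ne.symm hk)]
      simp [Matrix.mul_apply, hC, hk]
  · have h0 : ∀ r, C r ⟨j, c⟩ = 0 := fun r => by simp [hC, hj]
    rcases eq_or_ne k j with rfl | hk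
    · rw [Matrix.blockDiagonal'_apply_eq, Pi.single_eq_of_ne hj]
      simp [Matrix.mul_apply, h0]
    · rw [Matrix.blockDiagonal'_apply_ne _ _ _ (Ne.symm hk)]
      simp [Matrix.mul_apply, h0]

lemma trace_key {N : ℕ} {ndim mdim : Fin N → ℕ}
    (Ablk Pblk : ∀ i, Matrix (Fin (ndim i)) (Fin (ndim i)) ℝ)
    (hPblk : ∀ i, (Pblk i).PosDef)
    (C0 : ∀ i, Matrix (Fin (mdim i)) (Fin (ndim i)) ℝ)
    (R : ∀ i, Matrix (Fin (mdim i)) (Fin (mdim i)) ℝ) (hR : ∀ i, (R i).PosDef)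
    (C : ∀ i, Matrix (Fin (mdim i)) (Σ j, Fin (ndim j)) ℝ)
    (hC : ∀ (i : Fin N) (r : Fin (mdim i)) (j : Fin N) (c : Fin (ndim j)),
      C i r ⟨j, c⟩ = if h : j = i then C0 i r (h ▸ c) else 0)
    (g : Fin N → ℝ) (hg : ∀ i, g i = 0 ∨ g i = 1) :
    ((Matrix.blockDiagonal' Ablk) *
        ((Matrix.blockDiagonal' Pblk)⁻¹ + ∑ i, g i • ((C i)ᵀ * (R i)⁻¹ * C i))⁻¹ *
        (Matrix.blockDiagonal' Ablk)ᵀ).trace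
      = (∑ i, (Ablk i * Pblk i * (Ablk i)ᵀ).trace)
        - ∑ i, g i * (Ablk i * Pblk i * (C0 i)ᵀ
            * (C0 i * Pblk i * (C0 i)ᵀ + R i)⁻¹ * C0 i * Pblk i * (Ablk i)ᵀ).trace := by
  set Bs : ∀ j, Matrix (Fin (ndim j)) (Fin (ndim j)) ℝ :=
    fun j => g j • ((C0 j)ᵀ * (R j)⁻¹ * C0 j) with hBs
  have hsum : ∑ i, g i • ((C i)ᵀ * (R i)⁻¹ * C i) = Matrix.blockDiagonal' Bs := by
    have h1 : ∀ i : Fin N, g i • ((C i)ᵀ * (R i)⁻¹ * C i)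
        = Matrix.blockDiagonal' (Pi.single i (Bs i)) := fun i => by
      rw [sensor_block i (C i) (C0 i) (hC i) ((R i)⁻¹), hBs, Pi.single_smul,
        Matrix.blockDiagonal'_smul]
    calc ∑ i, g i • ((C i)ᵀ * (R i)⁻¹ * C i)
        = ∑ i, Matrix.blockDiagonal' (Pi.single i (Bs i)) := by
          exact Finset.sum_congr rfl fun i _ => h1 i
      _ = Matrix.blockDiagonal' (∑ i, Pi.single i (Bs i)) :=
          (map_sum (Matrix.blockDiagonal'AddMonoidHom _ _ ℝ) _ _).symm
      _ = Matrix.blockDiagonal' Bs := by rw [Finset.univ_sum_single]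
  have hXsemi : ∀ i, (Bs i).PosSemidef := by
    intro i
    rcases hg i with h | h
    · simp only [hBs, h, zero_smul]
      exact Matrix.PosSemidef.zero
    · simp only [hBs, h, one_smul]
      have := ((hR i).inv.posSemidef).conjTranspose_mul_mul_same (C0 i)
      rwa [Matrix.conjTranspose_eq_transpose_of_trivial] at this
  have hblk : ∀ i, ((Pblk i)⁻¹ + Bs i).PosDef :=
    fun i => Matrix.PosDef.add_posSemidef (hPblk i).inv (hXsemi i)
  have hinvblk : ∀ i, ((Pblk i)⁻¹ + Bs i)⁻¹
      = Pblk i - g i • (Pblk i * (C0 i)ᵀ * (C0 i * Pblk i * (C0 i)ᵀ + R i)⁻¹ * C0 i * Pblk i) := by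
    intro i
    rcases hg i with h | h
    · simp only [hBs, h, zero_smul, add_zero, sub_zero]
      exact Matrix.nonsing_inv_nonsing_inv _ ((Matrix.isUnit_iff_isUnit_det _).1 (hPblk i).isUnit)
    · simp only [hBs, h, one_smul]
      rw [woodbury_posdef (hPblk i) (hR i) (C0 i)]
  rw [hsum, blockDiagonal'_inv_eq Pblk (fun i => (hPblk i).isUnit), ← Matrix.blockDiagonal'_add,
    Pi.add_def, blockDiagonal'_inv_eq _ (fun i => (hblk i).isUnit), Matrix.blockDiagonal'_transpose,
    ← Matrix.blockDiagonal'_mul, ← Matrix.blockDiagonal'_mul, Matrix.trace_blockDiagonal']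
  rw [← Finset.sum_sub_distrib]
  refine Finset.sum_congr rfl fun i _ => ?_
  rw [hinvblk i]
  simp only [Matrix.mul_sub, Matrix.sub_mul, Matrix.trace_sub, Matrix.mul_smul,
    Matrix.smul_mul, Matrix.trace_smul, smul_eq_mul, Matrix.mul_assoc]


/-- (Proposition 3, decoupled systems, horizon one.) For a
block-diagonal system with sensors observing distinct subsystems, arrival
variables `γᵢ(u)` with marginals `pᵢ(u)`, and one-step-ahead cost
`C(P,u) = E[Tr(A (P⁻¹ + Σᵢ γᵢ(u) CᵢᵀRᵢ⁻¹Cᵢ)⁻¹ Aᵀ)] + Tr(Q) + μ Σᵢ [u]ᵢ`,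
one has `C(P,u) < C(P,v)` iff
`Σᵢ ψᵢ(Pᵢ)pᵢ(u) − μΣᵢ[u]ᵢ > Σᵢ ψᵢ(Pᵢ)pᵢ(v) − μΣᵢ[v]ᵢ`. -/
theorem stmt_3 {N : ℕ} (ndim mdim : Fin N → ℕ)
    {Ω : Type*} [MeasurableSpace Ω] (μmeas : Measure Ω) [IsProbabilityMeasure μmeas]
    (U : Type*) [Fintype U] [Nonempty U]
    (pw : U → Fin N → ℝ) (hpw : ∀ u i, 0 ≤ pw u i)
    (μ : ℝ) (hμ : 0 ≤ μ)
    (γ : U → Fin N → Ω → ℝ) (hγmeas : ∀ u i, Measurable (γ u i))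
    (hγval : ∀ u i ω, γ u i ω = 0 ∨ γ u i ω = 1)
    (p : U → Fin N → ℝ) (hp : ∀ u i, (∫ ω, γ u i ω ∂μmeas) = p u i)
    (Ablk Pblk : ∀ i, Matrix (Fin (ndim i)) (Fin (ndim i)) ℝ)
    (hPblk : ∀ i, (Pblk i).PosDef)
    (C0 : ∀ i, Matrix (Fin (mdim i)) (Fin (ndim i)) ℝ)
    (R : ∀ i, Matrix (Fin (mdim i)) (Fin (mdim i)) ℝ) (hR : ∀ i, (R i).PosDef)
    (A P Q : Matrix (Σ i, Fin (ndim i)) (Σ i, Fin (ndim i)) ℝ)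
    (hA : A = Matrix.blockDiagonal' Ablk) (hP : P = Matrix.blockDiagonal' Pblk)
    (hQ : Q.PosSemidef)
    (C : ∀ i, Matrix (Fin (mdim i)) (Σ j, Fin (ndim j)) ℝ)
    (hC : ∀ (i : Fin N) (r : Fin (mdim i)) (j : Fin N) (c : Fin (ndim j)),
      C i r ⟨j, c⟩ = if h : j = i then C0 i r (h ▸ c) else 0)
    (ψ : Fin N → ℝ)
    (hψ : ∀ i, ψ i = (Ablk i * Pblk i * (C0 i)ᵀ
        * (C0 i * Pblk i * (C0 i)ᵀ + R i)⁻¹ * C0 i * Pblk i * (Ablk i)ᵀ).trace)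
    (cost : U → ℝ)
    (hcost : ∀ u, cost u =
      (∫ ω, (A * (P⁻¹ + ∑ i, γ u i ω • ((C i)ᵀ * (R i)⁻¹ * C i))⁻¹ * Aᵀ).trace ∂μmeas)
        + Q.trace + μ * ∑ i, pw u i)
    (u v : U) :
    cost u < cost v ↔
      (∑ i, ψ i * p v i) - μ * ∑ i, pw v i < (∑ i, ψ i * p u i) - μ * ∑ i, pw u i := by
  subst hA hP
  set K : ℝ := ∑ i, (Ablk i * Pblk i * (Ablk i)ᵀ).trace with hK
  have key : ∀ (w : U) (ω : Ω),
      ((Matrix.blockDiagonal' Ablk) *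
          ((Matrix.blockDiagonal' Pblk)⁻¹ + ∑ i, γ w i ω • ((C i)ᵀ * (R i)⁻¹ * C i))⁻¹ *
          (Matrix.blockDiagonal' Ablk)ᵀ).trace
        = K - ∑ i, γ w i ω * ψ i := by
    intro w ω
    rw [trace_key Ablk Pblk hPblk C0 R hR C hC (fun i => γ w i ω) (fun i => hγval w i ω)]
    simp only [hψ, hK]
  have hγint : ∀ (w : U) (i : Fin N), Integrable (γ w i) μmeas := by
    intro w i
    refine Integrable.mono' (integrable_const 1) (hγmeas w i).aestronglyMeasurable ?_
    filter_upwards with ω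
    rcases hγval w i ω with h | h <;> simp [h]
  have hint : ∀ w : U,
      (∫ ω, ((Matrix.blockDiagonal' Ablk) *
          ((Matrix.blockDiagonal' Pblk)⁻¹ + ∑ i, γ w i ω • ((C i)ᵀ * (R i)⁻¹ * C i))⁻¹ *
          (Matrix.blockDiagonal' Ablk)ᵀ).trace ∂μmeas)
        = K - ∑ i, ψ i * p w i := by
    intro w
    have h1 : ∀ ω, ((Matrix.blockDiagonal' Ablk) *
          ((Matrix.blockDiagonal' Pblk)⁻¹ + ∑ i, γ w i ω • ((C i)ᵀ * (R i)⁻¹ * C i))⁻¹ *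
          (Matrix.blockDiagonal' Ablk)ᵀ).trace = K - ∑ i, γ w i ω * ψ i := key w
    rw [MeasureTheory.integral_congr_ae (Filter.Eventually.of_forall h1)]
    have hintsum : Integrable (fun ω => ∑ i, γ w i ω * ψ i) μmeas :=
      integrable_finset_sum _ (fun i _ => (hγint w i).mul_const (ψ i))
    rw [MeasureTheory.integral_sub (integrable_const K) hintsum,
      MeasureTheory.integral_const, MeasureTheory.integral_finset_sum _
        (fun i _ => (hγint w i).mul_const (ψ i))]
    simp only [measure_univ, probReal_univ, ENNReal.toReal_one, smul_eq_mul, one_mul]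
    congr 1
    refine Finset.sum_congr rfl fun i _ => ?_
    rw [MeasureTheory.integral_mul_const, hp w i, mul_comm]
  have costeq : ∀ w : U, cost w = K - (∑ i, ψ i * p w i) + Q.trace + μ * ∑ i, pw w i := by
    intro w
    rw [hcost w, hint w]
  rw [costeq u, costeq v]
  constructor <;> intro h <;> linarith
end

section
/- Let X₁ and X₂ be independent real random variables with X₁ exponentially distributed with rate λ₁ > 0 and X₂ exponentially distributed with rate λ₂ > 0, and let α ∈ (0,1) and σ² > 0. Then P(X₁ > α(X₂ + σ²) and X₂ > α(X₁ + σ²)) = (λ₁/(λ₁ + αλ₂) + λ₂/(λ₂ + αλ₁) − 1) · exp(−(λ₁ + λ₂)·ασ²/(1−α)). -/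
open MeasureTheory ProbabilityTheory Real
open Set

lemma my_integral_exp_Ioi {b : ℝ} (hb : 0 < b) (a : ℝ) :
    ∫ x in Ioi a, rexp (-(b * x)) = rexp (-(b * a)) / b := by
  have hderiv : ∀ x ∈ Ici a, HasDerivAt (fun x => -rexp (-(b * x)) / b) (rexp (-(b * x))) x := by
    intro x _
    have : HasDerivAt (fun x => -(b * x)) (-b) x := by
      simpa using ((hasDerivAt_id x).const_mul b).fun_neg
    have := (this.exp).neg.div_const b
    refine this.congr_deriv ?_
    field_simp
  have hint : IntegrableOn (fun x : ℝ => rexp (-(b * x))) (Ioi a) := by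
    simpa [neg_mul] using exp_neg_integrableOn_Ioi a hb
  have htend : Filter.Tendsto (fun x => -rexp (-(b * x)) / b) Filter.atTop (nhds 0) := by
    have h1 : Filter.Tendsto (fun x : ℝ => b * x) Filter.atTop Filter.atTop :=
      Filter.tendsto_id.const_mul_atTop hb
    have : Filter.Tendsto (fun x : ℝ => rexp (-(b * x))) Filter.atTop (nhds 0) :=
      Real.tendsto_exp_neg_atTop_nhds_zero.comp h1
    simpa using (this.neg.div_const b)
  have := integral_Ioi_of_hasDerivAt_of_tendsto' hderiv hint htend
  rw [this]
  field_simp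
  ring

lemma expMeasure_noAtoms {r : ℝ} : ∀ x : ℝ, expMeasure r {x} = 0 := by
  intro x
  rw [expMeasure, gammaMeasure]
  exact withDensity_absolutelyContinuous _ _ (measure_singleton x)

lemma expMeasure_Iic {r : ℝ} (hr : 0 < r) {x : ℝ} (hx : 0 ≤ x) :
    expMeasure r (Iic x) = ENNReal.ofReal (1 - rexp (-(r * x))) := by
  have := isProbabilityMeasure_expMeasure hr
  rw [← ProbabilityTheory.ofReal_cdf]
  congr 1
  have := cdf_expMeasure_eq hr x
  rw [this, if_pos hx]

lemma expMeasure_Ioo {r : ℝ} (hr : 0 < r) {a b : ℝ} (ha : 0 ≤ a) :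
    expMeasure r (Ioo a b) = ENNReal.ofReal (rexp (-(r * a)) - rexp (-(r * b))) := by
  have := isProbabilityMeasure_expMeasure hr
  rcases le_or_gt b a with h | h
  · rw [Ioo_eq_empty (by exact fun hab => absurd h (not_le.mpr hab)), measure_empty]
    symm
    rw [ENNReal.ofReal_eq_zero, sub_nonpos]
    exact exp_le_exp.mpr (by nlinarith)
  · haveI : NullSingletonClass (expMeasure r) := ⟨expMeasure_noAtoms⟩
    have hIoc : expMeasure r (Ioo a b) = expMeasure r (Ioc a b) :=
      measure_congr (Ioo_ae_eq_Ioc)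
    rw [hIoc, ← Iic_sdiff_Iic,
      measure_diff (Iic_subset_Iic.mpr h.le) measurableSet_Iic.nullMeasurableSet
        (measure_ne_top _ _),
      expMeasure_Iic hr ha, expMeasure_Iic hr (ha.trans h.le),
      ← ENNReal.ofReal_sub _ (by nlinarith [exp_le_one_iff.mpr (neg_nonpos.mpr (mul_nonneg hr.le ha)), exp_pos (-(r*a))])]
    congr 1
    ring
set_option maxHeartbeats 1000000 in

/-- For independent `X₁ ~ Exp(λ₁)`, `X₂ ~ Exp(λ₂)` and `α ∈ (0,1)`,
`σ² > 0`, the probability that both SINRs exceed `α`, i.e.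
`P(X₁ > α(X₂+σ²) ∧ X₂ > α(X₁+σ²))`, equals
`(λ₁/(λ₁+αλ₂) + λ₂/(λ₂+αλ₁) − 1)·exp(−(λ₁+λ₂)·ασ²/(1−α))`. -/
theorem stmt_8 {Ω : Type*} [MeasureTheory.MeasureSpace Ω]
    (μ : Measure Ω) [IsProbabilityMeasure μ]
    (X1 X2 : Ω → ℝ) (hX1m : Measurable X1) (hX2m : Measurable X2)
    (l1 l2 : ℝ) (hl1 : 0 < l1) (hl2 : 0 < l2)
    (hX1 : Measure.map X1 μ = expMeasure l1)
    (hX2 : Measure.map X2 μ = expMeasure l2)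
    (hindep : IndepFun X1 X2 μ)
    (α σ2 : ℝ) (hα : α ∈ Set.Ioo (0:ℝ) 1) (hσ2 : 0 < σ2) :
    μ {ω | X1 ω > α * (X2 ω + σ2) ∧ X2 ω > α * (X1 ω + σ2)}
      = ENNReal.ofReal
          ((l1 / (l1 + α * l2) + l2 / (l2 + α * l1) - 1)
            * rexp (-(l1 + l2) * (α * σ2 / (1 - α)))) := by
  obtain ⟨hα0, hα1⟩ := hα
  have h1α : (0:ℝ) < 1 - α := by linarith
  set x0 : ℝ := α * σ2 / (1 - α) with hx0def
  have hx0pos : 0 < x0 := by positivity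
  have hb1 : (0:ℝ) < l1 + α * l2 := by positivity
  have hb2 : (0:ℝ) < l1 + l2 / α := by positivity
  -- the event set in the product space
  set S : Set (ℝ × ℝ) := {p | p.1 > α * (p.2 + σ2) ∧ p.2 > α * (p.1 + σ2)} with hSdef
  have := isProbabilityMeasure_expMeasure hl1
  have := isProbabilityMeasure_expMeasure hl2
  have hSm : MeasurableSet S := by
    apply MeasurableSet.inter
    · exact measurableSet_lt ((measurable_snd.add_const σ2).const_mul α) measurable_fst
    · exact measurableSet_lt ((measurable_fst.add_const σ2).const_mul α) measurable_snd
  have hmap : μ.map (fun ω => (X1 ω, X2 ω)) = (expMeasure l1).prod (expMeasure l2) := by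
    rw [← hX1, ← hX2]
    exact (indepFun_iff_map_prod_eq_prod_map_map hX1m.aemeasurable hX2m.aemeasurable).mp hindep
  have hev : μ {ω | X1 ω > α * (X2 ω + σ2) ∧ X2 ω > α * (X1 ω + σ2)}
      = ((expMeasure l1).prod (expMeasure l2)) S := by
    rw [← hmap, Measure.map_apply (hX1m.prodMk hX2m) hSm]
    rfl
  rw [hev, Measure.prod_apply hSm]
  -- slices
  have hpre : ∀ x : ℝ, Prod.mk x ⁻¹' S = Ioo (α * (x + σ2)) (x / α - σ2) := by
    intro x
    ext y
    simp only [mem_preimage, hSdef, mem_setOf_eq, mem_Ioo]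
    constructor
    · rintro ⟨h1, h2⟩
      refine ⟨h2, ?_⟩
      rw [lt_sub_iff_add_lt, lt_div_iff₀ hα0]
      nlinarith
    · rintro ⟨h1, h2⟩
      rw [lt_sub_iff_add_lt, lt_div_iff₀ hα0] at h2
      exact ⟨by nlinarith, h1⟩
  -- a.e. rewrite of the slice measure
  have hae0 : ∀ᵐ x ∂(expMeasure l1), 0 ≤ x := by
    rw [ae_iff]
    have : {x : ℝ | ¬ 0 ≤ x} = Iio 0 := by ext x; simp
    rw [this, expMeasure, gammaMeasure, withDensity_apply _ measurableSet_Iio]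
    simpa using lintegral_gammaPDF_of_nonpos (le_refl (0:ℝ)) (a := 1) (r := l1)
  have hcongr : ∫⁻ x, expMeasure l2 (Prod.mk x ⁻¹' S) ∂(expMeasure l1)
      = ∫⁻ x, ENNReal.ofReal
          (rexp (-(l2 * (α * (x + σ2)))) - rexp (-(l2 * (x / α - σ2)))) ∂(expMeasure l1) := by
    refine lintegral_congr_ae ?_
    filter_upwards [hae0] with x hx
    rw [hpre x, expMeasure_Ioo hl2 (by positivity)]
  rw [hcongr]
  -- to a Lebesgue integral with density
  have hexpd : expMeasure l1 = volume.withDensity (exponentialPDF l1) := rfl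
  have hgm : Measurable fun x : ℝ => ENNReal.ofReal
      (rexp (-(l2 * (α * (x + σ2)))) - rexp (-(l2 * (x / α - σ2)))) := by fun_prop
  have hpdfm : Measurable (exponentialPDF l1) :=
    (measurable_exponentialPDFReal l1).ennreal_ofReal
  rw [hexpd, lintegral_withDensity_eq_lintegral_mul _ hpdfm hgm]
  -- the integrand as an indicator
  have hhi_lo : ∀ x : ℝ, x ≤ x0 → x / α - σ2 ≤ α * (x + σ2) := by
    intro x hx
    rw [hx0def] at hx
    rw [sub_le_iff_le_add, div_le_iff₀ hα0]
    rw [le_div_iff₀ h1α] at hx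
    nlinarith
  have hind : (fun x => (exponentialPDF l1 * fun x : ℝ => ENNReal.ofReal
        (rexp (-(l2 * (α * (x + σ2)))) - rexp (-(l2 * (x / α - σ2))))) x)
      = fun x => (Ioi x0).indicator (fun x => ENNReal.ofReal
          (l1 * rexp (-(l1 * x)) *
            (rexp (-(l2 * (α * (x + σ2)))) - rexp (-(l2 * (x / α - σ2)))))) x := by
    funext x
    simp only [Pi.mul_apply]
    rcases le_or_gt x x0 with hx | hx
    · rw [indicator_of_notMem (by simpa using hx)]
      have : rexp (-(l2 * (α * (x + σ2)))) - rexp (-(l2 * (x / α - σ2))) ≤ 0 := by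
        rw [sub_nonpos]
        exact exp_le_exp.mpr (by nlinarith [hhi_lo x hx])
      rw [ENNReal.ofReal_eq_zero.mpr this, mul_zero]
    · rw [indicator_of_mem (by simpa using hx),
        exponentialPDF_of_nonneg (le_of_lt (hx0pos.trans hx)),
        ← ENNReal.ofReal_mul (by positivity)]
  rw [hind, lintegral_indicator measurableSet_Ioi]
  -- pass to a real integral
  set h : ℝ → ℝ := fun x => l1 * rexp (-(l1 * x)) *
      (rexp (-(l2 * (α * (x + σ2)))) - rexp (-(l2 * (x / α - σ2)))) with hhdef
  have hhrw : ∀ x : ℝ, h x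
      = (l1 * rexp (-(l2 * (α * σ2)))) * rexp (-((l1 + α * l2) * x))
        - (l1 * rexp (l2 * σ2)) * rexp (-((l1 + l2 / α) * x)) := by
    intro x
    simp only [hhdef]
    have c1 : l1 * rexp (-(l1 * x)) * rexp (-(l2 * (α * (x + σ2))))
        = l1 * rexp (-(l2 * (α * σ2))) * rexp (-((l1 + α * l2) * x)) := by
      rw [mul_assoc, mul_assoc, ← exp_add, ← exp_add]
      congr 2
      ring
    have c2 : l1 * rexp (-(l1 * x)) * rexp (-(l2 * (x / α - σ2)))
        = l1 * rexp (l2 * σ2) * rexp (-((l1 + l2 / α) * x)) := by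
      rw [mul_assoc, mul_assoc, ← exp_add, ← exp_add]
      congr 2
      field_simp
      ring
    rw [mul_sub, c1, c2]
  have hint1 : IntegrableOn (fun x : ℝ => rexp (-((l1 + α * l2) * x))) (Ioi x0) := by
    simpa only [neg_mul] using exp_neg_integrableOn_Ioi x0 hb1
  have hint2 : IntegrableOn (fun x : ℝ => rexp (-((l1 + l2 / α) * x))) (Ioi x0) := by
    simpa only [neg_mul] using exp_neg_integrableOn_Ioi x0 hb2
  have hhint : IntegrableOn h (Ioi x0) := by
    have : h = fun x => (l1 * rexp (-(l2 * (α * σ2)))) * rexp (-((l1 + α * l2) * x))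
        - (l1 * rexp (l2 * σ2)) * rexp (-((l1 + l2 / α) * x)) := funext hhrw
    rw [this]
    exact (hint1.const_mul _).sub (hint2.const_mul _)
  have hnn : 0 ≤ᵐ[volume.restrict (Ioi x0)] h := by
    filter_upwards [ae_restrict_mem measurableSet_Ioi] with x hx
    simp only [Pi.zero_apply, hhdef]
    have hlohi : α * (x + σ2) ≤ x / α - σ2 := by
      rw [mem_Ioi] at hx
      rw [le_sub_iff_add_le, le_div_iff₀ hα0]
      rw [hx0def, div_lt_iff₀ h1α] at hx
      nlinarith
    have : rexp (-(l2 * (α * (x + σ2)))) - rexp (-(l2 * (x / α - σ2))) ≥ 0 := by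
      rw [ge_iff_le, sub_nonneg]
      exact exp_le_exp.mpr (by nlinarith)
    positivity
  rw [← ofReal_integral_eq_lintegral_ofReal hhint hnn]
  congr 1
  calc ∫ x in Ioi x0, h x
      = ∫ x in Ioi x0, ((l1 * rexp (-(l2 * (α * σ2)))) * rexp (-((l1 + α * l2) * x))
        - (l1 * rexp (l2 * σ2)) * rexp (-((l1 + l2 / α) * x))) := by
        exact setIntegral_congr_fun measurableSet_Ioi fun x _ => hhrw x
    _ = (l1 * rexp (-(l2 * (α * σ2)))) * (rexp (-((l1 + α * l2) * x0)) / (l1 + α * l2))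
        - (l1 * rexp (l2 * σ2)) * (rexp (-((l1 + l2 / α) * x0)) / (l1 + l2 / α)) := by
        rw [integral_sub (hint1.const_mul _) (hint2.const_mul _),
          integral_const_mul, integral_const_mul, my_integral_exp_Ioi hb1, my_integral_exp_Ioi hb2]
    _ = (l1 / (l1 + α * l2) + l2 / (l2 + α * l1) - 1) * rexp (-(l1 + l2) * (α * σ2 / (1 - α))) := by
        have e1 : rexp (-(l2 * (α * σ2))) * rexp (-((l1 + α * l2) * x0))
            = rexp (-(l1 + l2) * (α * σ2 / (1 - α))) := by
          rw [← exp_add]; congr 1; rw [hx0def]; field_simp; ring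
        have e2 : rexp (l2 * σ2) * rexp (-((l1 + l2 / α) * x0))
            = rexp (-(l1 + l2) * (α * σ2 / (1 - α))) := by
          rw [← exp_add]; congr 1; rw [hx0def]; field_simp; ring
        have hb3 : (0:ℝ) < l2 + α * l1 := by positivity
        calc (l1 * rexp (-(l2 * (α * σ2)))) * (rexp (-((l1 + α * l2) * x0)) / (l1 + α * l2))
            - (l1 * rexp (l2 * σ2)) * (rexp (-((l1 + l2 / α) * x0)) / (l1 + l2 / α))
            = (l1 / (l1 + α * l2)) * (rexp (-(l2 * (α * σ2))) * rexp (-((l1 + α * l2) * x0)))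
              - (l1 / (l1 + l2 / α)) * (rexp (l2 * σ2) * rexp (-((l1 + l2 / α) * x0))) := by
              ring
          _ = (l1 / (l1 + α * l2) - l1 / (l1 + l2 / α))
              * rexp (-(l1 + l2) * (α * σ2 / (1 - α))) := by rw [e1, e2]; ring
          _ = (l1 / (l1 + α * l2) + l2 / (l2 + α * l1) - 1)
              * rexp (-(l1 + l2) * (α * σ2 / (1 - α))) := by
              congr 1
              field_simp
              ring
end

section
/- Let X₁ and X₂ be independent real random variables with X₁ exponentially distributed with rate λ₁ > 0 and X₂ exponentially distributed with rate λ₂ > 0, and let α ∈ (0,1) and σ² > 0. Then P(X₁ > α(X₂ + σ²) and X₂ ≤ α(X₁ + σ²)) = (λ₂/(λ₂ + αλ₁))·exp(−αλ₁σ²) − (λ₁/(λ₁ + αλ₂) + λ₂/(λ₂ + αλ₁) − 1)·exp(−(λ₁ + λ₂)·ασ²/(1−α)). -/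
open MeasureTheory ProbabilityTheory Real

section Aux

open Set

lemma stmt10_intInt (b t : ℝ) (hb : 0 < b) :
    ∫ y in (0:ℝ)..t, rexp (-(b*y)) = (1 - rexp (-(b*t)))/b := by
  have h := intervalIntegral.integral_comp_mul_left (a := 0) (b := t) (fun x => rexp (-x))
    (c := b) (ne_of_gt hb)
  simp only [neg_mul_eq_neg_mul] at h ⊢
  rw [h, intervalIntegral.integral_comp_neg (fun x => rexp x), integral_exp,
    smul_eq_mul]
  rw [mul_zero, neg_zero, exp_zero, neg_mul]
  ring

lemma stmt10_ioiInt (b c : ℝ) (hb : 0 < b) :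
    ∫ y in Ioi c, rexp (-(b*y)) = rexp (-(b*c))/b := by
  have h := integral_comp_mul_left_Ioi (fun x => rexp (-x)) c hb
  simp only [neg_mul_eq_neg_mul] at h ⊢
  rw [h, integral_exp_neg_Ioi, smul_eq_mul, neg_mul]
  ring

lemma stmt10_lintIoc (K b t : ℝ) (hK : 0 ≤ K) (hb : 0 < b) (ht : 0 ≤ t) :
    ∫⁻ y in Ioc (0:ℝ) t, ENNReal.ofReal (K * rexp (-(b * y)))
      = ENNReal.ofReal (K * ((1 - rexp (-(b * t))) / b)) := by
  rw [← ofReal_integral_eq_lintegral_ofReal]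
  · rw [integral_const_mul, ← intervalIntegral.integral_of_le ht, stmt10_intInt b t hb]
  · exact (ProbabilityTheory.exp_neg_integrableOn_Ioc hb).const_mul _
  · exact ae_of_all _ fun y => by positivity

lemma stmt10_lintIoi (K b t : ℝ) (hK : 0 ≤ K) (hb : 0 < b) :
    ∫⁻ y in Ioi t, ENNReal.ofReal (K * rexp (-(b * y)))
      = ENNReal.ofReal (K * (rexp (-(b * t)) / b)) := by
  rw [← ofReal_integral_eq_lintegral_ofReal]
  · rw [integral_const_mul, stmt10_ioiInt b t hb]
  · refine Integrable.const_mul ?_ _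
    have h := exp_neg_integrableOn_Ioi t hb
    simp only [neg_mul] at h; exact h
  · exact ae_of_all _ fun y => by positivity

lemma stmt10_expMeasure_singleton (r x : ℝ) : expMeasure r {x} = 0 := by
  rw [expMeasure, gammaMeasure]
  exact (withDensity_absolutelyContinuous _ _) (measure_singleton x)

lemma stmt10_expMeasure_Ioi {r : ℝ} (hr : 0 < r) {x : ℝ} (hx : 0 ≤ x) :
    expMeasure r (Ioi x) = ENNReal.ofReal (rexp (-(r*x))) := by
  have hp : IsProbabilityMeasure (expMeasure r) := isProbabilityMeasure_expMeasure hr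
  have hIic : expMeasure r (Iic x) = ENNReal.ofReal (1 - rexp (-(r*x))) := by
    rw [expMeasure, gammaMeasure, withDensity_apply _ measurableSet_Iic,
      show gammaPDF 1 r = exponentialPDF r from rfl,
      lintegral_exponentialPDF_eq_antiDeriv hr, if_pos hx]
  have h1 : rexp (-(r*x)) ≤ 1 := exp_le_one_iff.mpr (by nlinarith)
  rw [show Ioi x = (Iic x)ᶜ from (compl_Iic).symm,
    measure_compl measurableSet_Iic (measure_ne_top _ _), hIic, measure_univ,
    ← ENNReal.ofReal_one, ← ENNReal.ofReal_sub _ (by linarith [exp_pos (-(r*x))])]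
  norm_num

lemma stmt10_expMeasure_Ici {r : ℝ} (hr : 0 < r) {x : ℝ} (hx : 0 ≤ x) :
    expMeasure r (Ici x) = ENNReal.ofReal (rexp (-(r*x))) := by
  rw [← stmt10_expMeasure_Ioi hr hx]
  refine le_antisymm ?_ (measure_mono Ioi_subset_Ici_self)
  calc expMeasure r (Ici x) ≤ expMeasure r (Ioi x ∪ {x}) := by
        refine measure_mono fun y hy => ?_
        rcases eq_or_lt_of_le (mem_Ici.mp hy) with h | h
        · exact Or.inr (by simp [h.symm])
        · exact Or.inl h
    _ ≤ expMeasure r (Ioi x) + expMeasure r {x} := measure_union_le _ _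
    _ = expMeasure r (Ioi x) := by rw [stmt10_expMeasure_singleton]; simp

lemma stmt10_expMeasure_neg (r : ℝ) : expMeasure r (Iio 0) = 0 := by
  rw [expMeasure, gammaMeasure, withDensity_apply _ measurableSet_Iio,
    show gammaPDF 1 r = exponentialPDF r from rfl]
  exact lintegral_exponentialPDF_of_nonpos le_rfl

end Aux

open Set in
set_option maxHeartbeats 4000000 in
/-- For independent `X₁ ~ Exp(λ₁)`, `X₂ ~ Exp(λ₂)`, `α ∈ (0,1)` and
`σ² > 0`, the probability that only sensor 1's packet is received is
`P(X₁ > α(X₂+σ²) ∧ X₂ ≤ α(X₁+σ²)) = (λ₂/(λ₂+αλ₁))·exp(−αλ₁σ²)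
  − (λ₁/(λ₁+αλ₂) + λ₂/(λ₂+αλ₁) − 1)·exp(−(λ₁+λ₂)·ασ²/(1−α))`. -/
theorem stmt_10 {Ω : Type*} [MeasureTheory.MeasureSpace Ω]
    (μ : Measure Ω) [IsProbabilityMeasure μ]
    (X1 X2 : Ω → ℝ) (hX1m : Measurable X1) (hX2m : Measurable X2)
    (l1 l2 : ℝ) (hl1 : 0 < l1) (hl2 : 0 < l2)
    (hX1 : Measure.map X1 μ = expMeasure l1)
    (hX2 : Measure.map X2 μ = expMeasure l2)
    (hindep : IndepFun X1 X2 μ)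
    (α σ2 : ℝ) (hα : α ∈ Set.Ioo (0:ℝ) 1) (hσ2 : 0 < σ2) :
    μ {ω | X1 ω > α * (X2 ω + σ2) ∧ X2 ω ≤ α * (X1 ω + σ2)}
      = ENNReal.ofReal
          (l2 / (l2 + α * l1) * rexp (-(α * l1 * σ2))
            - (l1 / (l1 + α * l2) + l2 / (l2 + α * l1) - 1)
              * rexp (-(l1 + l2) * (α * σ2 / (1 - α)))) := by
  classical
  obtain ⟨hα0, hα1⟩ := hα
  have h1α : (0:ℝ) < 1 - α := by linarith
  set t : ℝ := α * σ2 / (1 - α) with ht_def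
  have ht : 0 < t := by positivity
  haveI : IsProbabilityMeasure (expMeasure l1) := isProbabilityMeasure_expMeasure hl1
  haveI : IsProbabilityMeasure (expMeasure l2) := isProbabilityMeasure_expMeasure hl2
  set S : Set (ℝ × ℝ) := {p : ℝ × ℝ | α * (p.2 + σ2) < p.1 ∧ p.2 ≤ α * (p.1 + σ2)} with hS_def
  have hSm : MeasurableSet S :=
    (measurableSet_lt (by fun_prop : Measurable fun p : ℝ × ℝ => α * (p.2 + σ2))
        (by fun_prop : Measurable fun p : ℝ × ℝ => p.1)).inter
      (measurableSet_le (by fun_prop : Measurable fun p : ℝ × ℝ => p.2)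
        (by fun_prop : Measurable fun p : ℝ × ℝ => α * (p.1 + σ2)))
  have hmap : μ {ω | X1 ω > α * (X2 ω + σ2) ∧ X2 ω ≤ α * (X1 ω + σ2)}
      = ((expMeasure l1).prod (expMeasure l2)) S := by
    rw [← hX1, ← hX2,
      ← (indepFun_iff_map_prod_eq_prod_map_map hX1m.aemeasurable hX2m.aemeasurable).mp hindep,
      Measure.map_apply (hX1m.prodMk hX2m) hSm]
    rfl
  rw [hmap, Measure.prod_apply_symm hSm]
  -- the decoding threshold for X1 given X2 = y
  set c : ℝ → ℝ := fun y => max (α * (y + σ2)) (y / α - σ2) with hc_def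
  have hcm : Measurable fun y => ENNReal.ofReal (rexp (-(l1 * c y))) := by
    apply Measurable.ennreal_ofReal
    fun_prop
  have hslice : ∀ y : ℝ, 0 ≤ y →
      expMeasure l1 ((fun x => (x, y)) ⁻¹' S) = ENNReal.ofReal (rexp (-(l1 * c y))) := by
    intro y hy
    have ha0 : 0 ≤ α * (y + σ2) := by positivity
    have h2 : ∀ x : ℝ, (y ≤ α * (x + σ2)) ↔ (y / α - σ2 ≤ x) := by
      intro x
      rw [sub_le_iff_le_add, div_le_iff₀ hα0]
      exact ⟨fun h => by nlinarith, fun h => by nlinarith⟩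
    have hset : (fun x => (x, y)) ⁻¹' S = Ioi (α * (y + σ2)) ∩ Ici (y / α - σ2) := by
      ext x
      simp only [hS_def, mem_preimage, mem_setOf_eq, mem_inter_iff, mem_Ioi, mem_Ici, h2 x]
    rcases le_or_gt (y / α - σ2) (α * (y + σ2)) with h | h
    · have hi : Ioi (α * (y + σ2)) ∩ Ici (y / α - σ2) = Ioi (α * (y + σ2)) :=
        inter_eq_left.mpr fun x hx => le_trans h (le_of_lt hx)
      rw [hset, hi, stmt10_expMeasure_Ioi hl1 ha0, hc_def]
      simp only [max_eq_left h]
    · have hi : Ioi (α * (y + σ2)) ∩ Ici (y / α - σ2) = Ici (y / α - σ2) :=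
        inter_eq_right.mpr fun x hx => lt_of_lt_of_le h hx
      rw [hset, hi, stmt10_expMeasure_Ici hl1 (le_trans ha0 (le_of_lt h)), hc_def]
      simp only [max_eq_right (le_of_lt h)]
  -- replace the slice-measure integrand a.e.
  have hae : ∫⁻ y, expMeasure l1 ((fun x => (x, y)) ⁻¹' S) ∂(expMeasure l2)
      = ∫⁻ y, ENNReal.ofReal (rexp (-(l1 * c y))) ∂(expMeasure l2) := by
    apply lintegral_congr_ae
    have : ∀ᵐ y ∂(expMeasure l2), 0 ≤ y := by
      rw [ae_iff]
      refine measure_mono_null (fun y hy => ?_) (stmt10_expMeasure_neg l2)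
      simpa using lt_of_not_ge (by simpa using hy)
    filter_upwards [this] with y hy using hslice y hy
  rw [hae]
  -- unfold the density of the exponential measure
  have hwd : ∫⁻ y, ENNReal.ofReal (rexp (-(l1 * c y))) ∂(expMeasure l2)
      = ∫⁻ y, exponentialPDF l2 y * ENNReal.ofReal (rexp (-(l1 * c y))) := by
    rw [show expMeasure l2 = volume.withDensity (exponentialPDF l2) from rfl]
    rw [lintegral_withDensity_eq_lintegral_mul _
      (show Measurable (exponentialPDF l2) from (measurable_exponentialPDFReal l2).ennreal_ofReal)
      hcm]
    rfl
  rw [hwd]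
  set b1 : ℝ := l2 + α * l1 with hb1_def
  set b2 : ℝ := l2 + l1 / α with hb2_def
  have hb1 : 0 < b1 := by positivity
  have hb2 : 0 < b2 := by positivity
  set F : ℝ → ENNReal := fun y => exponentialPDF l2 y * ENNReal.ofReal (rexp (-(l1 * c y)))
    with hF_def
  -- kill the negative part
  have hIic0 : ∫⁻ y in Iic (0:ℝ), F y = 0 := by
    rw [← setLIntegral_congr (Iio_ae_eq_Iic (a := (0:ℝ)))]
    calc ∫⁻ y in Iio (0:ℝ), F y = ∫⁻ _ in Iio (0:ℝ), (0:ENNReal) :=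
          setLIntegral_congr_fun measurableSet_Iio
            (fun y hy => by simp [hF_def, exponentialPDF_of_neg (mem_Iio.mp hy)])
      _ = 0 := by simp
  have hsplit : ∫⁻ y, F y = (∫⁻ y in Ioc 0 t, F y) + ∫⁻ y in Ioi t, F y := by
    rw [← lintegral_add_compl F (measurableSet_Iic : MeasurableSet (Iic (0:ℝ))), hIic0, zero_add,
      compl_Iic, ← Ioc_union_Ioi_eq_Ioi (le_of_lt ht),
      lintegral_union measurableSet_Ioi (Ioc_disjoint_Ioi le_rfl)]
  -- first piece
  have hpiece1 : ∫⁻ y in Ioc 0 t, F y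
      = ENNReal.ofReal ((l2 * rexp (-(α * l1 * σ2))) * ((1 - rexp (-(b1 * t))) / b1)) := by
    have hcongr : ∫⁻ y in Ioc 0 t, F y
        = ∫⁻ y in Ioc 0 t, ENNReal.ofReal ((l2 * rexp (-(α * l1 * σ2))) * rexp (-(b1 * y))) := by
      apply setLIntegral_congr_fun measurableSet_Ioc
      refine fun y hy => ?_
      obtain ⟨hy0, hyt⟩ := hy
      have hyt' : y * (1 - α) ≤ α * σ2 := by
        rw [ht_def] at hyt
        calc y * (1 - α) ≤ (α * σ2 / (1 - α)) * (1 - α) := by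
              exact mul_le_mul_of_nonneg_right hyt (le_of_lt h1α)
          _ = α * σ2 := by field_simp
      have hmax : c y = α * (y + σ2) := by
        apply max_eq_left
        rw [sub_le_iff_le_add, div_le_iff₀ hα0]
        nlinarith [mul_le_mul_of_nonneg_right hyt' (by linarith : (0:ℝ) ≤ 1 + α)]
      simp only [hF_def]
      rw [hmax, exponentialPDF_of_nonneg (le_of_lt hy0),
        ← ENNReal.ofReal_mul (by positivity)]
      congr 1
      calc l2 * rexp (-(l2 * y)) * rexp (-(l1 * (α * (y + σ2))))
          = l2 * rexp (-(l2 * y) + -(l1 * (α * (y + σ2)))) := by rw [mul_assoc, ← exp_add]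
        _ = l2 * rexp (-(α * l1 * σ2) + -(b1 * y)) := by
            congr 2
            rw [hb1_def]; ring
        _ = (l2 * rexp (-(α * l1 * σ2))) * rexp (-(b1 * y)) := by rw [exp_add]; ring
    rw [hcongr, stmt10_lintIoc _ _ _ (by positivity) hb1 (le_of_lt ht)]
  -- second piece
  have hpiece2 : ∫⁻ y in Ioi t, F y
      = ENNReal.ofReal ((l2 * rexp (l1 * σ2)) * (rexp (-(b2 * t)) / b2)) := by
    have hcongr : ∫⁻ y in Ioi t, F y
        = ∫⁻ y in Ioi t, ENNReal.ofReal ((l2 * rexp (l1 * σ2)) * rexp (-(b2 * y))) := by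
      apply setLIntegral_congr_fun measurableSet_Ioi
      refine fun y hy => ?_
      have hy0 : (0:ℝ) ≤ y := le_trans (le_of_lt ht) (le_of_lt hy)
      have hyt' : α * σ2 ≤ y * (1 - α) := by
        rw [ht_def] at hy
        calc α * σ2 = (α * σ2 / (1 - α)) * (1 - α) := by field_simp
          _ ≤ y * (1 - α) := mul_le_mul_of_nonneg_right (le_of_lt hy) (le_of_lt h1α)
      have hmax : c y = y / α - σ2 := by
        apply max_eq_right
        rw [le_sub_iff_add_le, le_div_iff₀ hα0]
        nlinarith [mul_le_mul_of_nonneg_right hyt' (by linarith : (0:ℝ) ≤ 1 + α)]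
      simp only [hF_def]
      rw [hmax, exponentialPDF_of_nonneg hy0,
        ← ENNReal.ofReal_mul (by positivity)]
      congr 1
      calc l2 * rexp (-(l2 * y)) * rexp (-(l1 * (y / α - σ2)))
          = l2 * rexp (-(l2 * y) + -(l1 * (y / α - σ2))) := by rw [mul_assoc, ← exp_add]
        _ = l2 * rexp (l1 * σ2 + -(b2 * y)) := by
            congr 1
            rw [hb2_def]
            field_simp
            ring
        _ = (l2 * rexp (l1 * σ2)) * rexp (-(b2 * y)) := by rw [exp_add]; ring
    rw [hcongr, stmt10_lintIoi _ _ _ (by positivity) hb2]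
  have hexble : rexp (-(b1 * t)) ≤ 1 := exp_le_one_iff.mpr (by nlinarith)
  have hA : 0 ≤ l2 * rexp (-(α * l1 * σ2)) * ((1 - rexp (-(b1 * t))) / b1) :=
    mul_nonneg (mul_nonneg (le_of_lt hl2) (le_of_lt (exp_pos _)))
      (div_nonneg (by linarith) (le_of_lt hb1))
  rw [hsplit, hpiece1, hpiece2, ← ENNReal.ofReal_add hA (by positivity)]
  congr 1
  have e1 : rexp (-(α * l1 * σ2)) * rexp (-(b1 * t)) = rexp (-(l1 + l2) * t) := by
    rw [← exp_add]
    congr 1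
    rw [hb1_def, ht_def]
    field_simp
    ring
  have e2 : rexp (l1 * σ2) * rexp (-(b2 * t)) = rexp (-(l1 + l2) * t) := by
    rw [← exp_add]
    congr 1
    rw [hb2_def, ht_def]
    field_simp
    ring
  have hb1ne : b1 ≠ 0 := ne_of_gt hb1
  have hd2 : l1 + α * l2 ≠ 0 := by positivity
  have h1 : l2 * rexp (-(α * l1 * σ2)) * ((1 - rexp (-(b1 * t))) / b1)
      = l2 / b1 * rexp (-(α * l1 * σ2)) - l2 / b1 * rexp (-(l1 + l2) * t) := by
    rw [← e1]
    field_simp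
  have h2 : l2 * rexp (l1 * σ2) * (rexp (-(b2 * t)) / b2)
      = (α * l2) / (l1 + α * l2) * rexp (-(l1 + l2) * t) := by
    rw [← e2]
    set X := rexp (-(b2 * t)) with hX
    rw [hb2_def]
    field_simp
    ring
  rw [h1, h2, hb1_def]
  field_simp
  ring
end

section
/- Let μ > 0 and let q₁, q₂, p₁, p₂ satisfy 0 < pᵢ ≤ qᵢ ≤ 1 for i = 1,2. For nonnegative reals x₁, x₂ (the values ψ₁(P₁), ψ₂(P₂)), define the four one-step-ahead costs (up to a common additive constant) C₀₀ = 0, C₁₀ = −q₁x₁ + μ, C₀₁ = −q₂x₂ + μ, C₁₁ = −p₁x₁ − p₂x₂ + 2μ. Then: (i) if x₁ < μ/q₁ and x₂ < μ/q₂, then C₀₀ is the strict minimum; (ii) if (q₁−p₁)x₁ + μ < p₂x₂ and (q₂−p₂)x₂ + μ < p₁x₁, then C₁₁ is the strict minimum; (iii) if q₁x₁ > q₂x₂ and neither the conditions of (i) nor of (ii) hold, then C₁₀ = min{C₀₀, C₁₀, C₀₁, C₁₁}; (iv) if q₁x₁ < q₂x₂ and neither the conditions of (i) nor of (ii) hold,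 then C₀₁ = min{C₀₀, C₁₀, C₀₁, C₁₁}. -/
/-- Threshold structure of the optimal one-step-ahead action for two
decoupled subsystems with two power levels. With `xᵢ = ψᵢ(Pᵢ) ≥ 0` and costs (up to a
common additive constant) `C₀₀ = 0`, `C₁₀ = −q₁x₁ + μ`, `C₀₁ = −q₂x₂ + μ`,
`C₁₁ = −p₁x₁ − p₂x₂ + 2μ`:
(i) if `x₁ < μ/q₁` and `x₂ < μ/q₂` then `C₀₀` is the strict minimum;
(ii) if `(q₁−p₁)x₁ + μ < p₂x₂` and `(q₂−p₂)x₂ + μ < p₁x₁` then `C₁₁` is the strict minimum;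
(iii) if `q₁x₁ > q₂x₂` and neither (i) nor (ii) holds, `C₁₀` attains the minimum;
(iv) if `q₁x₁ < q₂x₂` and neither (i) nor (ii) holds, `C₀₁` attains the minimum. -/
theorem stmt_16 (μ q1 q2 p1 p2 x1 x2 : ℝ)
    (hμ : 0 < μ)
    (hp1 : 0 < p1) (hp2 : 0 < p2)
    (hpq1 : p1 ≤ q1) (hpq2 : p2 ≤ q2)
    (hq1 : q1 ≤ 1) (hq2 : q2 ≤ 1)
    (hx1 : 0 ≤ x1) (hx2 : 0 ≤ x2)
    (C00 C10 C01 C11 : ℝ)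
    (h00 : C00 = 0) (h10 : C10 = -(q1 * x1) + μ)
    (h01 : C01 = -(q2 * x2) + μ) (h11 : C11 = -(p1 * x1) - p2 * x2 + 2 * μ) :
    ((x1 < μ / q1 ∧ x2 < μ / q2) →
        (C00 < C10 ∧ C00 < C01 ∧ C00 < C11)) ∧
    (((q1 - p1) * x1 + μ < p2 * x2 ∧ (q2 - p2) * x2 + μ < p1 * x1) →
        (C11 < C00 ∧ C11 < C10 ∧ C11 < C01)) ∧
    ((q1 * x1 > q2 * x2 ∧
        ¬(x1 < μ / q1 ∧ x2 < μ / q2) ∧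
        ¬((q1 - p1) * x1 + μ < p2 * x2 ∧ (q2 - p2) * x2 + μ < p1 * x1)) →
        C10 = min (min C00 C10) (min C01 C11)) ∧
    ((q1 * x1 < q2 * x2 ∧
        ¬(x1 < μ / q1 ∧ x2 < μ / q2) ∧
        ¬((q1 - p1) * x1 + μ < p2 * x2 ∧ (q2 - p2) * x2 + μ < p1 * x1)) →
        C01 = min (min C00 C10) (min C01 C11)) := by
  subst h00 h10 h01 h11
  have hq1p : 0 < q1 := lt_of_lt_of_le hp1 hpq1
  have hq2p : 0 < q2 := lt_of_lt_of_le hp2 hpq2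
  refine ⟨?_, ?_, ?_, ?_⟩
  · rintro ⟨h1, h2⟩
    have g1 : q1 * x1 < μ := (lt_div_iff₀' hq1p).mp h1
    have g2 : q2 * x2 < μ := (lt_div_iff₀' hq2p).mp h2
    refine ⟨by linarith, by linarith, ?_⟩
    have : p1 * x1 ≤ q1 * x1 := mul_le_mul_of_nonneg_right hpq1 hx1
    have : p2 * x2 ≤ q2 * x2 := mul_le_mul_of_nonneg_right hpq2 hx2
    linarith
  · rintro ⟨h1, h2⟩
    have hA : 0 ≤ (q1 - p1) * x1 := mul_nonneg (by linarith) hx1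
    have hB : 0 ≤ (q2 - p2) * x2 := mul_nonneg (by linarith) hx2
    exact ⟨by nlinarith, by nlinarith, by nlinarith⟩
  · rintro ⟨h1, h2, h3⟩
    have key1 : μ ≤ q1 * x1 := by
      rcases not_and_or.mp h2 with h | h
      · exact (div_le_iff₀' hq1p).mp (le_of_not_gt h)
      · have : μ ≤ q2 * x2 := (div_le_iff₀' hq2p).mp (le_of_not_gt h)
        linarith
    have key2 : p2 * x2 ≤ (q1 - p1) * x1 + μ := by
      rcases not_and_or.mp h3 with h | h
      · exact le_of_not_gt h
      · have hb : p1 * x1 ≤ (q2 - p2) * x2 + μ := le_of_not_gt h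
        nlinarith
    have e1 : -(q1 * x1) + μ ≤ 0 := by linarith
    have e2 : -(q1 * x1) + μ ≤ -(q2 * x2) + μ := by linarith
    have e3 : -(q1 * x1) + μ ≤ -(p1 * x1) - p2 * x2 + 2 * μ := by nlinarith
    rw [min_eq_right e1, min_eq_left (le_min e2 e3)]
  · rintro ⟨h1, h2, h3⟩
    have key1 : μ ≤ q2 * x2 := by
      rcases not_and_or.mp h2 with h | h
      · have : μ ≤ q1 * x1 := (div_le_iff₀' hq1p).mp (le_of_not_gt h)
        linarith
      · exact (div_le_iff₀' hq2p).mp (le_of_not_gt h)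
    have key2 : p1 * x1 ≤ (q2 - p2) * x2 + μ := by
      rcases not_and_or.mp h3 with h | h
      · have ha : p2 * x2 ≤ (q1 - p1) * x1 + μ := le_of_not_gt h
        nlinarith
      · exact le_of_not_gt h
    have e1 : -(q2 * x2) + μ ≤ 0 := by linarith
    have e2 : -(q2 * x2) + μ ≤ -(q1 * x1) + μ := by linarith
    have e3 : -(q2 * x2) + μ ≤ -(p1 * x1) - p2 * x2 + 2 * μ := by nlinarith
    rw [min_eq_left e3, min_eq_right (le_min e1 e2)]
end

section
/- Let A be an n×n real matrix, Q a symmetric positive definite n×n matrix, C an m×n real matrix, R a symmetric positive definite m×m matrix, and p ∈ [0,1]. Let (γ_k)_{k≥1} be i.i.d. Bernoulli(p) random variables, let P₁ be a (deterministic) symmetric positive definite n×n matrix, and define the random sequence P_{k+1} = A (P_k⁻¹ + γ_k Cᵀ R⁻¹ C)⁻¹ Aᵀ + Q. Define the deterministic sequence P̄₁ = P₁, P̄_{k+1} = A P̄_k Aᵀ + Q − p · A P̄_k Cᵀ (C P̄_k Cᵀ + R)⁻¹ C P̄_k Aᵀ. Then for every k ≥ 1, E[P_k] ⪯ P̄_k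 in the Loewner order. -/
open Matrix MeasureTheory ProbabilityTheory

namespace S17

noncomputable instance matMS {a b : ℕ} : MeasurableSpace (Matrix (Fin a) (Fin b) ℝ) :=
  inferInstanceAs (MeasurableSpace (Fin a → Fin b → ℝ))

variable {Ω : Type*} [MeasurableSpace Ω] {μ : Measure Ω}

lemma comb_identity {a : ℕ} (p : ℝ) (u T Q : Matrix (Fin a) (Fin a) ℝ) :
    (1 - p) • (u + Q) + p • (u - T + Q) = u + Q - p • T := by
  simp only [sub_smul, one_smul, smul_add, smul_sub]
  abel


lemma psd_smul {a : ℕ} {M : Matrix (Fin a) (Fin a) ℝ} (hM : M.PosSemidef) {c : ℝ} (hc : 0 ≤ c) :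
    (c • M).PosSemidef := by
  rw [Matrix.posSemidef_iff_dotProduct_mulVec]
  refine ⟨?_, fun x => ?_⟩
  · unfold Matrix.IsHermitian
    rw [conjTranspose_smul, hM.1.eq]
    simp
  · rw [smul_mulVec, dotProduct_smul, smul_eq_mul]
    exact mul_nonneg hc (hM.dotProduct_mulVec_nonneg x)

lemma psd_conj {a b : ℕ} {M : Matrix (Fin a) (Fin a) ℝ} (hM : M.PosSemidef)
    (B : Matrix (Fin b) (Fin a) ℝ) : (B * M * Bᵀ).PosSemidef := by
  simpa [conjTranspose_eq_transpose_of_trivial] using hM.mul_mul_conjTranspose_same B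

lemma psd_conj' {a b : ℕ} {M : Matrix (Fin a) (Fin a) ℝ} (hM : M.PosSemidef)
    (B : Matrix (Fin a) (Fin b) ℝ) : (Bᵀ * M * B).PosSemidef := by
  simpa [conjTranspose_eq_transpose_of_trivial] using hM.conjTranspose_mul_mul_same B

lemma sym_of_psd {a : ℕ} {M : Matrix (Fin a) (Fin a) ℝ} (hM : M.PosSemidef) : Mᵀ = M := by
  rw [← conjTranspose_eq_transpose_of_trivial, hM.1.eq]

/-- The key algebraic inequality: quadratic-in-K form dominates the information-form update. -/
lemma key_ineq {X : Matrix (Fin n) (Fin n) ℝ} (hX : X.PosDef)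
    (A Q : Matrix (Fin n) (Fin n) ℝ) (C : Matrix (Fin m) (Fin n) ℝ)
    {R : Matrix (Fin m) (Fin m) ℝ} (hR : R.PosDef)
    (K : Matrix (Fin n) (Fin m) ℝ) :
    (((A + K * C) * X * (A + K * C)ᵀ + K * R * Kᵀ + Q)
      - (A * (X⁻¹ + Cᵀ * R⁻¹ * C)⁻¹ * Aᵀ + Q)).PosSemidef := by
  have hXs : Xᵀ = X := sym_of_psd hX.posSemidef
  have hRs : Rᵀ = R := sym_of_psd hR.posSemidef
  have hRinv : (R⁻¹).PosDef := hR.inv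
  have hRis : (R⁻¹)ᵀ = R⁻¹ := sym_of_psd hRinv.posSemidef
  set M : Matrix (Fin n) (Fin n) ℝ := X⁻¹ + Cᵀ * R⁻¹ * C with hMdef
  have hM : M.PosDef := hX.inv.add_posSemidef (psd_conj' hRinv.posSemidef C)
  have hMs : Mᵀ = M := sym_of_psd hM.posSemidef
  have hW : (M⁻¹).PosDef := hM.inv
  have hWs : (M⁻¹)ᵀ = M⁻¹ := sym_of_psd hW.posSemidef
  set W : Matrix (Fin n) (Fin n) ℝ := M⁻¹ with hWdef
  set S : Matrix (Fin m) (Fin m) ℝ := C * X * Cᵀ + R with hSdef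
  have hS : S.PosDef := Matrix.PosDef.posSemidef_add (psd_conj hX.posSemidef C) hR
  haveI : Invertible X := hX.isUnit.invertible
  haveI : Invertible R := hR.isUnit.invertible
  haveI : Invertible M := hM.isUnit.invertible
  -- core cancellation identities
  have r1 : ∀ (a : ℕ) (Z : Matrix (Fin n) (Fin a) ℝ),
      X * (Cᵀ * (R⁻¹ * (C * (W * Z)))) = X * Z - W * Z := by
    intro a Z
    have h1 : X * (M * (W * Z)) = X * Z := by
      rw [hWdef, ← Matrix.mul_assoc M, Matrix.mul_inv_of_invertible, Matrix.one_mul]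
    have h2 : M * (W * Z) = X⁻¹ * (W * Z) + Cᵀ * (R⁻¹ * (C * (W * Z))) := by
      rw [hMdef, Matrix.add_mul, Matrix.mul_assoc, Matrix.mul_assoc]
    rw [h2, Matrix.mul_add, Matrix.mul_inv_cancel_left_of_invertible] at h1
    rw [eq_sub_iff_add_eq, add_comm]
    exact h1
  have r2 : ∀ (a : ℕ) (Z : Matrix (Fin n) (Fin a) ℝ),
      W * (Cᵀ * (R⁻¹ * (C * (X * Z)))) = X * Z - W * Z := by
    intro a Z
    have h1 : W * (M * (X * Z)) = X * Z := by
      rw [hWdef, ← Matrix.mul_assoc, Matrix.inv_mul_of_invertible, Matrix.one_mul]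
    have h2 : M * (X * Z) = X⁻¹ * (X * Z) + Cᵀ * (R⁻¹ * (C * (X * Z))) := by
      rw [hMdef, Matrix.add_mul, Matrix.mul_assoc, Matrix.mul_assoc]
    rw [h2, Matrix.mul_add, Matrix.inv_mul_cancel_left_of_invertible] at h1
    rw [eq_sub_iff_add_eq, add_comm]
    exact h1
  have key : ((A + K * C) * X * (A + K * C)ᵀ + K * R * Kᵀ + Q)
      - (A * W * Aᵀ + Q)
      = (K + A * W * (Cᵀ * R⁻¹)) * S * (K + A * W * (Cᵀ * R⁻¹))ᵀ := by
    simp only [transpose_add, transpose_mul, transpose_transpose, hXs, hWs, hRis, hSdef,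
      Matrix.add_mul, Matrix.mul_add, Matrix.sub_mul, Matrix.mul_sub, Matrix.mul_assoc,
      r1, r2, Matrix.mul_inv_cancel_left_of_invertible, Matrix.inv_mul_cancel_left_of_invertible]
    abel
  rw [key]
  exact psd_conj hS.posSemidef _

lemma psd_sub_trans {a : ℕ} {X Y Z : Matrix (Fin a) (Fin a) ℝ}
    (h1 : (Y - X).PosSemidef) (h2 : (Z - Y).PosSemidef) : (Z - X).PosSemidef := by
  have h := h2.add h1
  have e : Z - Y + (Y - X) = Z - X := by abel
  rwa [e] at h

lemma opt_identity {Y : Matrix (Fin n) (Fin n) ℝ} (hY : Y.PosSemidef)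
    (A : Matrix (Fin n) (Fin n) ℝ) (C : Matrix (Fin m) (Fin n) ℝ)
    {R : Matrix (Fin m) (Fin m) ℝ} (hR : R.PosDef) :
    (A + -(A * Y * Cᵀ * (C * Y * Cᵀ + R)⁻¹) * C) * Y
        * (A + -(A * Y * Cᵀ * (C * Y * Cᵀ + R)⁻¹) * C)ᵀ
      + -(A * Y * Cᵀ * (C * Y * Cᵀ + R)⁻¹) * R * (-(A * Y * Cᵀ * (C * Y * Cᵀ + R)⁻¹))ᵀ
    = A * Y * Aᵀ - A * Y * Cᵀ * (C * Y * Cᵀ + R)⁻¹ * C * Y * Aᵀ := by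
  have hYs : Yᵀ = Y := sym_of_psd hY
  set S : Matrix (Fin m) (Fin m) ℝ := C * Y * Cᵀ + R with hSdef
  have hS : S.PosDef := Matrix.PosDef.posSemidef_add (psd_conj hY C) hR
  have hSs : Sᵀ = S := sym_of_psd hS.posSemidef
  have hSis : (S⁻¹)ᵀ = S⁻¹ := by rw [Matrix.transpose_nonsing_inv, hSs]
  haveI : Invertible S := hS.isUnit.invertible
  have h1 : C * Y * Cᵀ = S - R := by rw [hSdef]; abel
  have r5 : ∀ (a : ℕ) (Z : Matrix (Fin m) (Fin a) ℝ),
      C * (Y * (Cᵀ * (S⁻¹ * Z))) = Z - R * (S⁻¹ * Z) := by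
    intro a Z
    rw [← Matrix.mul_assoc, ← Matrix.mul_assoc, h1, Matrix.sub_mul,
      Matrix.mul_inv_cancel_left_of_invertible]
  simp only [transpose_neg, transpose_add, transpose_mul, transpose_transpose, hYs, hSis,
    Matrix.add_mul, Matrix.mul_add, Matrix.neg_mul, Matrix.mul_neg, Matrix.mul_assoc,
    r5, Matrix.mul_sub, Matrix.sub_mul, Matrix.mul_inv_cancel_left_of_invertible]
  abel

lemma mono_step {p : ℝ} (hp0 : 0 ≤ p) (hp1 : p ≤ 1)
    (A Q : Matrix (Fin n) (Fin n) ℝ) (C : Matrix (Fin m) (Fin n) ℝ)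
    (R : Matrix (Fin m) (Fin m) ℝ) (K : Matrix (Fin n) (Fin m) ℝ)
    {E Y : Matrix (Fin n) (Fin n) ℝ} (hD : (Y - E).PosSemidef) :
    (((1 - p) • (A * Y * Aᵀ + Q) + p • ((A + K * C) * Y * (A + K * C)ᵀ + K * R * Kᵀ + Q))
      - ((1 - p) • (A * E * Aᵀ + Q)
          + p • ((A + K * C) * E * (A + K * C)ᵀ + K * R * Kᵀ + Q))).PosSemidef := by
  have hid : ((1 - p) • (A * Y * Aᵀ + Q) + p • ((A + K * C) * Y * (A + K * C)ᵀ + K * R * Kᵀ + Q))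
      - ((1 - p) • (A * E * Aᵀ + Q) + p • ((A + K * C) * E * (A + K * C)ᵀ + K * R * Kᵀ + Q))
      = (1 - p) • (A * (Y - E) * Aᵀ) + p • ((A + K * C) * (Y - E) * (A + K * C)ᵀ) := by
    simp only [Matrix.mul_sub, Matrix.sub_mul, smul_sub, smul_add]
    abel
  rw [hid]
  exact (psd_smul (psd_conj hD A) (by linarith)).add (psd_smul (psd_conj hD _) hp0)

lemma step_posDef {X : Matrix (Fin n) (Fin n) ℝ} (hX : X.PosDef)
    (A : Matrix (Fin n) (Fin n) ℝ) {Q : Matrix (Fin n) (Fin n) ℝ} (hQ : Q.PosDef)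
    (C : Matrix (Fin m) (Fin n) ℝ) {R : Matrix (Fin m) (Fin m) ℝ} (hR : R.PosDef)
    {g : ℝ} (hg0 : 0 ≤ g) :
    (A * (X⁻¹ + g • (Cᵀ * R⁻¹ * C))⁻¹ * Aᵀ + Q).PosDef := by
  have hM : (X⁻¹ + g • (Cᵀ * R⁻¹ * C)).PosDef :=
    hX.inv.add_posSemidef (psd_smul (psd_conj' hR.inv.posSemidef C) hg0)
  exact Matrix.PosDef.posSemidef_add (psd_conj hM.inv.posSemidef A) hQ

lemma key_ineq' {X : Matrix (Fin n) (Fin n) ℝ} (hX : X.PosDef)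
    (A Q : Matrix (Fin n) (Fin n) ℝ) (C : Matrix (Fin m) (Fin n) ℝ)
    {R : Matrix (Fin m) (Fin m) ℝ} (hR : R.PosDef)
    (K : Matrix (Fin n) (Fin m) ℝ) {g : ℝ} (hg : g = 0 ∨ g = 1) :
    ((g • ((A + K * C) * X * (A + K * C)ᵀ + K * R * Kᵀ + Q) + (1 - g) • (A * X * Aᵀ + Q))
      - (A * (X⁻¹ + g • (Cᵀ * R⁻¹ * C))⁻¹ * Aᵀ + Q)).PosSemidef := by
  haveI : Invertible X := hX.isUnit.invertible
  rcases hg with h | h <;> subst h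
  · simp [Matrix.inv_inv_of_invertible]
    exact Matrix.PosSemidef.zero
  · simp only [one_smul, sub_self, zero_smul, add_zero]
    exact key_ineq hX A Q C hR K

lemma measurable_matrix {β : Type*} [MeasurableSpace β] {a b : ℕ}
    {f : β → Matrix (Fin a) (Fin b) ℝ} (hf : ∀ i j, Measurable fun x => f x i j) :
    Measurable f :=
  measurable_pi_lambda _ (fun i => measurable_pi_lambda _ (fun j => hf i j))

lemma measurable_entry {a b : ℕ} (i : Fin a) (j : Fin b) :
    Measurable fun M : Matrix (Fin a) (Fin b) ℝ => M i j :=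
  (measurable_pi_apply j).comp (measurable_pi_apply i)

lemma integrable_of_finite_range {Ω : Type*} [MeasurableSpace Ω] {μ : Measure Ω}
    [IsProbabilityMeasure μ] {f : Ω → ℝ} (hm : Measurable f) (hfr : (Set.range f).Finite) :
    Integrable f μ := by
  obtain ⟨Cb, hCb⟩ := (hfr.image abs).bddAbove
  refine (integrable_const Cb).mono' hm.aestronglyMeasurable
    (Filter.Eventually.of_forall fun ω => ?_)
  simpa [Real.norm_eq_abs] using hCb (Set.mem_image_of_mem _ (Set.mem_range_self ω))

lemma integral_indicator_eq {Ω : Type*} [MeasurableSpace Ω] {μ : Measure Ω}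
    [IsProbabilityMeasure μ] {g : Ω → ℝ} (hm : Measurable g)
    (hval : ∀ ω, g ω = 0 ∨ g ω = 1) {p : ℝ} (hp : 0 ≤ p)
    (hmeas : μ {ω | g ω = 1} = ENNReal.ofReal p) : ∫ ω, g ω ∂μ = p := by
  have hset : MeasurableSet {ω | g ω = 1} := hm (measurableSet_singleton 1)
  have : g = Set.indicator {ω | g ω = 1} (fun _ => (1:ℝ)) := by
    funext ω
    rcases hval ω with h | h <;> simp [Set.indicator, h]
  rw [this, integral_indicator_const _ hset, measureReal_def, hmeas, ENNReal.toReal_ofReal hp, smul_eq_mul, mul_one]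



lemma dot_expand {a : ℕ} (M : Matrix (Fin a) (Fin a) ℝ) (x : Fin a → ℝ) :
    star x ⬝ᵥ (M *ᵥ x) = ∑ i, ∑ j, x i * M i j * x j := by
  simp [dotProduct, Matrix.mulVec, Finset.mul_sum, mul_assoc]

lemma integral_psd [IsProbabilityMeasure μ] {a : ℕ}
    {f g : Ω → Matrix (Fin a) (Fin a) ℝ}
    (hfg : ∀ ω, (g ω - f ω).PosSemidef)
    (hf : ∀ i j, Integrable (fun ω => f ω i j) μ)
    (hg : ∀ i j, Integrable (fun ω => g ω i j) μ) :
    ((Matrix.of fun i j => ∫ ω, g ω i j ∂μ) - (Matrix.of fun i j => ∫ ω, f ω i j ∂μ)).PosSemidef := by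
  have hsym : ∀ ω i j, g ω j i - f ω j i = g ω i j - f ω i j := by
    intro ω i j
    have h := (hfg ω).1
    have h2 := congrFun (congrFun h i) j
    simpa [Matrix.conjTranspose_apply, Matrix.sub_apply] using h2
  rw [Matrix.posSemidef_iff_dotProduct_mulVec]
  constructor
  · ext i j
    simp only [conjTranspose_apply, Matrix.sub_apply, of_apply, star_trivial]
    rw [← integral_sub (hg j i) (hf j i), ← integral_sub (hg i j) (hf i j)]
    exact integral_congr_ae (Filter.Eventually.of_forall fun ω => hsym ω i j)
  · intro x
    rw [dot_expand]
    have hterm : ∀ i j : Fin a,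
        x i * ((Matrix.of fun i j => ∫ ω, g ω i j ∂μ) - Matrix.of fun i j => ∫ ω, f ω i j ∂μ) i j * x j
        = ∫ ω, x i * (g ω - f ω) i j * x j ∂μ := by
      intro i j
      simp only [Matrix.sub_apply, Matrix.of_apply]
      rw [← integral_sub (hg i j) (hf i j), ← integral_const_mul, ← integral_mul_const]
    simp only [hterm]
    have hint : ∀ i j : Fin a, Integrable (fun ω => x i * (g ω - f ω) i j * x j) μ := by
      intro i j
      have : (fun ω => x i * (g ω - f ω) i j * x j)
          = fun ω => x i * (g ω i j - f ω i j) * x j := by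
        funext ω; rfl
      rw [this]
      exact (((hg i j).sub (hf i j)).const_mul _).mul_const _
    have h1 : ∀ i : Fin a, ∑ j, ∫ ω, x i * (g ω - f ω) i j * x j ∂μ
        = ∫ ω, ∑ j, x i * (g ω - f ω) i j * x j ∂μ := fun i =>
      (integral_finset_sum _ fun j _ => hint i j).symm
    simp only [h1]
    rw [← integral_finset_sum _ fun i _ => integrable_finset_sum _ fun j _ => hint i j]
    refine integral_nonneg fun ω => ?_
    have h := (hfg ω).dotProduct_mulVec_nonneg x
    rw [dot_expand] at h
    simpa using h

lemma integral_affine {a b c d : ℕ} [IsProbabilityMeasure μ]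
    (U : Matrix (Fin a) (Fin b) ℝ) (V : Matrix (Fin c) (Fin d) ℝ) (W : Matrix (Fin a) (Fin d) ℝ)
    {f : Ω → Matrix (Fin b) (Fin c) ℝ} (hf : ∀ i j, Integrable (fun ω => f ω i j) μ) :
    (Matrix.of fun i j => ∫ ω, (U * f ω * V + W) i j ∂μ)
      = U * (Matrix.of fun i j => ∫ ω, f ω i j ∂μ) * V + W := by
  ext i j
  have e1 : ∀ ω : Ω, (U * f ω * V + W) i j
      = (∑ t, ∑ s, U i s * (f ω s t * V t j)) + W i j := by
    intro ω
    simp [Matrix.mul_apply, Matrix.add_apply, Finset.sum_mul, mul_assoc]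
  have hint2 : ∀ (t : Fin c), Integrable (fun ω => ∑ s, U i s * (f ω s t * V t j)) μ :=
    fun t => integrable_finset_sum _ fun s _ => ((hf s t).mul_const _).const_mul _
  have hint1 : Integrable (fun ω => ∑ t, ∑ s, U i s * (f ω s t * V t j)) μ :=
    integrable_finset_sum _ fun t _ => hint2 t
  simp only [Matrix.of_apply, e1]
  rw [integral_add hint1 (integrable_const _), integral_const, probReal_univ,
    integral_finset_sum _ (fun t _ => hint2 t)]
  have e2 : ∀ t : Fin c, ∫ ω, ∑ s, U i s * (f ω s t * V t j) ∂μ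
      = ∑ s, U i s * ((∫ ω, f ω s t ∂μ) * V t j) := by
    intro t
    rw [integral_finset_sum _ (fun s _ => ((hf s t).mul_const _).const_mul _)]
    refine Finset.sum_congr rfl fun s _ => ?_
    rw [integral_const_mul, integral_mul_const]
  simp only [e2]
  simp [Matrix.mul_apply, Matrix.add_apply, Finset.sum_mul, mul_assoc]


lemma emeas_mul {α : Type*} [MeasurableSpace α] {a b c : ℕ}
    {f : α → Matrix (Fin a) (Fin b) ℝ} {g : α → Matrix (Fin b) (Fin c) ℝ}
    (hf : ∀ i j, Measurable fun x => f x i j) (hg : ∀ i j, Measurable fun x => g x i j) :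
    ∀ i j, Measurable fun x => (f x * g x) i j := by
  intro i j
  simp only [Matrix.mul_apply]
  exact Finset.measurable_sum _ fun k _ => (hf i k).mul (hg k j)

lemma emeas_det {α : Type*} [MeasurableSpace α] {a : ℕ} {f : α → Matrix (Fin a) (Fin a) ℝ}
    (hf : ∀ i j, Measurable fun x => f x i j) : Measurable fun x => (f x).det := by
  simp only [Matrix.det_apply']
  exact Finset.measurable_sum _ fun σ _ =>
    (Finset.measurable_prod _ fun k _ => hf (σ k) k).const_mul _

lemma emeas_adjugate {α : Type*} [MeasurableSpace α] {a : ℕ} {f : α → Matrix (Fin a) (Fin a) ℝ}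
    (hf : ∀ i j, Measurable fun x => f x i j) :
    ∀ i j, Measurable fun x => (f x).adjugate i j := by
  intro i j
  simp only [Matrix.adjugate_apply]
  apply emeas_det
  intro a b
  by_cases h : a = j
  · subst h; simp only [Matrix.updateRow_self]; exact measurable_const
  · simp only [Matrix.updateRow_ne h]; exact hf a b

lemma emeas_inv {α : Type*} [MeasurableSpace α] {a : ℕ} {f : α → Matrix (Fin a) (Fin a) ℝ}
    (hf : ∀ i j, Measurable fun x => f x i j) :
    ∀ i j, Measurable fun x => (f x)⁻¹ i j := by
  intro i j
  simp only [Matrix.inv_def, Ring.inverse_eq_inv', Matrix.smul_apply, smul_eq_mul]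
  exact ((emeas_det hf).inv).mul (emeas_adjugate hf i j)

noncomputable def Fseq {n : ℕ} (A Q N P1 : Matrix (Fin n) (Fin n) ℝ) :
    ℕ → (ℕ → ℝ) → Matrix (Fin n) (Fin n) ℝ
  | 0, _ => P1
  | 1, _ => P1
  | (k + 2), x => A * ((Fseq A Q N P1 (k + 1) x)⁻¹ + x (k + 1) • N)⁻¹ * Aᵀ + Q

lemma Fseq_meas {n : ℕ} (A Q N P1 : Matrix (Fin n) (Fin n) ℝ) :
    ∀ k, ∀ i j, Measurable fun x : ℕ → ℝ => Fseq A Q N P1 k x i j := by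
  intro k
  induction k with
  | zero => intro i j; simp only [Fseq]; exact measurable_const
  | succ k ih =>
    cases k with
    | zero => intro i j; simp only [Fseq]; exact measurable_const
    | succ k' =>
      intro i j
      have hM : ∀ i j, Measurable fun x : ℕ → ℝ =>
          ((Fseq A Q N P1 (k' + 1) x)⁻¹ + x (k' + 1) • N) i j := by
        intro i j
        simp only [Matrix.add_apply, Matrix.smul_apply, smul_eq_mul]
        exact (emeas_inv ih i j).add ((measurable_pi_apply (k' + 1)).mul_const _)
      have h2 := emeas_inv hM
      have h3 := emeas_mul (f := fun _ : ℕ → ℝ => A) (fun _ _ => measurable_const) h2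
      have h4 := emeas_mul h3 (g := fun _ : ℕ → ℝ => Aᵀ) (fun _ _ => measurable_const)
      simp only [Fseq, Matrix.add_apply]
      exact (h4 i j).add measurable_const

lemma Fseq_depends {n : ℕ} (A Q N P1 : Matrix (Fin n) (Fin n) ℝ) :
    ∀ k (x y : ℕ → ℝ), (∀ j, 1 ≤ j → j < k → x j = y j) →
      Fseq A Q N P1 k x = Fseq A Q N P1 k y := by
  intro k
  induction k with
  | zero => intro x y _; rfl
  | succ k ih =>
    cases k with
    | zero => intro x y _; rfl
    | succ k' =>
      intro x y h
      have h1 : x (k' + 1) = y (k' + 1) := h _ (Nat.succ_le_succ (Nat.zero_le _)) (Nat.lt_succ_self _)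
      have h2 : Fseq A Q N P1 (k' + 1) x = Fseq A Q N P1 (k' + 1) y :=
        ih x y fun j hj1 hj2 => h j hj1 (Nat.lt_succ_of_lt hj2)
      simp only [Fseq, h1, h2]

end S17

open S17 in
/-- (Lemma 1, key step.) For the Kalman filter with i.i.d.
Bernoulli(`p`) packet arrivals `(γ_k)_{k≥1}` and random predicted error covariance
`P_{k+1} = A (P_k⁻¹ + γ_k CᵀR⁻¹C)⁻¹ Aᵀ + Q`, the entrywise expectation `E[P_k]`
is dominated, in the Loewner order, by the deterministic modified Riccati sequence
`P̄_{k+1} = A P̄_k Aᵀ + Q − p·A P̄_k Cᵀ(C P̄_k Cᵀ + R)⁻¹ C P̄_k Aᵀ`, `P̄₁ = P₁`. -/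
theorem stmt_17 {n m : ℕ}
    (A Q : Matrix (Fin n) (Fin n) ℝ) (hQ : Q.PosDef)
    (C : Matrix (Fin m) (Fin n) ℝ)
    (R : Matrix (Fin m) (Fin m) ℝ) (hR : R.PosDef)
    (p : ℝ) (hp : p ∈ Set.Icc (0:ℝ) 1)
    {Ω : Type*} [MeasurableSpace Ω] (μ : Measure Ω) [IsProbabilityMeasure μ]
    (γ : ℕ → Ω → ℝ)
    (hγmeas : ∀ k, 1 ≤ k → Measurable (γ k))
    (hγval : ∀ k, 1 ≤ k → ∀ ω, γ k ω = 0 ∨ γ k ω = 1)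
    (hγbern : ∀ k, 1 ≤ k → μ {ω | γ k ω = 1} = ENNReal.ofReal p)
    (hγindep : iIndepFun
      (fun k : {k : ℕ // 1 ≤ k} => γ k.1) μ)
    (P1 : Matrix (Fin n) (Fin n) ℝ) (hP1 : P1.PosDef)
    (P : ℕ → Ω → Matrix (Fin n) (Fin n) ℝ)
    (hPinit : ∀ ω, P 1 ω = P1)
    (hPrec : ∀ k, 1 ≤ k → ∀ ω,
      P (k + 1) ω = A * ((P k ω)⁻¹ + γ k ω • (Cᵀ * R⁻¹ * C))⁻¹ * Aᵀ + Q)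
    (Pbar : ℕ → Matrix (Fin n) (Fin n) ℝ)
    (hPbarinit : Pbar 1 = P1)
    (hPbarrec : ∀ k, 1 ≤ k →
      Pbar (k + 1) = A * Pbar k * Aᵀ + Q
        - p • (A * Pbar k * Cᵀ * (C * Pbar k * Cᵀ + R)⁻¹ * C * Pbar k * Aᵀ)) :
    ∀ k, 1 ≤ k →
      (Pbar k - Matrix.of fun i j => ∫ ω, P k ω i j ∂μ).PosSemidef := by
  obtain ⟨hp0, hp1⟩ := hp
  set N : Matrix (Fin n) (Fin n) ℝ := Cᵀ * R⁻¹ * C with hNdef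
  set EP : ℕ → Matrix (Fin n) (Fin n) ℝ :=
    fun k => Matrix.of fun i j => ∫ ω, P k ω i j ∂μ with hEPdef
  -- factorization through the Bernoulli variables
  have hfact : ∀ k, 1 ≤ k → ∀ ω, P k ω = Fseq A Q N P1 k (fun j => γ j ω) := by
    intro k hk
    induction k, hk using Nat.le_induction with
    | base => intro ω; rw [hPinit]; rfl
    | succ k hk ih =>
      intro ω
      obtain ⟨k', rfl⟩ : ∃ k', k = k' + 1 := ⟨k - 1, (Nat.succ_pred_eq_of_pos hk).symm⟩
      rw [hPrec _ hk ω, ih ω]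
      rfl
  -- measurability of the entries of P k
  have hPmeas : ∀ k, 1 ≤ k → ∀ i j, Measurable fun ω => P k ω i j := by
    intro k hk i j
    have htrunc : Measurable fun ω => (fun j' => if 1 ≤ j' ∧ j' < k then γ j' ω else 0) := by
      apply measurable_pi_lambda
      intro j'
      by_cases h : 1 ≤ j' ∧ j' < k
      · simp only [if_pos h]; exact hγmeas j' h.1
      · simp only [if_neg h]; exact measurable_const
    have heq : (fun ω => P k ω i j)
        = (fun x : ℕ → ℝ => Fseq A Q N P1 k x i j) ∘
            (fun ω => fun j' => if 1 ≤ j' ∧ j' < k then γ j' ω else 0) := by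
      funext ω
      simp only [Function.comp_apply]
      rw [hfact k hk ω]
      have := Fseq_depends A Q N P1 k (fun j => γ j ω)
        (fun j' => if 1 ≤ j' ∧ j' < k then γ j' ω else 0)
        (fun j hj1 hj2 => by simp [hj1, hj2])
      rw [this]
    rw [heq]
    exact (Fseq_meas A Q N P1 k i j).comp htrunc
  have hPmatmeas : ∀ k, 1 ≤ k → Measurable (P k) := fun k hk =>
    measurable_matrix (hPmeas k hk)
  -- positive definiteness of P k ω
  have hPD : ∀ k, 1 ≤ k → ∀ ω, (P k ω).PosDef := by
    intro k hk
    induction k, hk using Nat.le_induction with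
    | base => intro ω; rw [hPinit]; exact hP1
    | succ k hk ih =>
      intro ω
      rw [hPrec k hk ω]
      have hg0 : 0 ≤ γ k ω := by rcases hγval k hk ω with h | h <;> rw [h] <;> norm_num
      exact step_posDef (ih ω) A hQ C hR hg0
  -- finite range
  have hfin : ∀ k, 1 ≤ k → (Set.range (P k)).Finite := by
    intro k hk
    induction k, hk using Nat.le_induction with
    | base =>
      refine (Set.finite_singleton P1).subset ?_
      rintro _ ⟨ω, rfl⟩
      simp [hPinit ω]
    | succ k hk ih =>
      refine ((ih.image (fun X => A * (X⁻¹ + (0:ℝ) • N)⁻¹ * Aᵀ + Q)).union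
        (ih.image (fun X => A * (X⁻¹ + (1:ℝ) • N)⁻¹ * Aᵀ + Q))).subset ?_
      rintro _ ⟨ω, rfl⟩
      rw [hPrec k hk ω]
      rcases hγval k hk ω with h | h <;> rw [h]
      · exact Or.inl ⟨P k ω, Set.mem_range_self ω, rfl⟩
      · exact Or.inr ⟨P k ω, Set.mem_range_self ω, rfl⟩
  -- integrability of measurable functionals of P k
  have hcompInt : ∀ k, 1 ≤ k → ∀ θ : Matrix (Fin n) (Fin n) ℝ → ℝ, Measurable θ →
      Integrable (fun ω => θ (P k ω)) μ := by
    intro k hk θ hθ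
    refine integrable_of_finite_range (hθ.comp (hPmatmeas k hk)) ?_
    refine ((hfin k hk).image θ).subset ?_
    rintro _ ⟨ω, rfl⟩
    exact ⟨P k ω, Set.mem_range_self ω, rfl⟩
  have hPint : ∀ k, 1 ≤ k → ∀ i j, Integrable (fun ω => P k ω i j) μ := by
    intro k hk i j
    exact hcompInt k hk (fun X => X i j) (measurable_entry i j)
  -- independence of γ k and P k
  have hind : ∀ k, 1 ≤ k → IndepFun (γ k) (P k) μ := by
    intro k hk
    classical
    set T : Finset {j : ℕ // 1 ≤ j} := (Finset.Ico 1 k).subtype fun j => 1 ≤ j with hT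
    have hdisj : Disjoint ({⟨k, hk⟩} : Finset {j : ℕ // 1 ≤ j}) T := by
      rw [Finset.disjoint_singleton_left]
      simp [hT, Finset.mem_subtype]
    have base := hγindep.indepFun_finset {⟨k, hk⟩} T hdisj (fun i => hγmeas i.1 i.2)
    set φ : (({⟨k, hk⟩} : Finset {j : ℕ // 1 ≤ j}) → ℝ) → ℝ :=
      fun v => v ⟨⟨k, hk⟩, Finset.mem_singleton_self _⟩ with hφdef
    set ψ : (T → ℝ) → Matrix (Fin n) (Fin n) ℝ := fun v =>
      Fseq A Q N P1 k (fun j => if h : 1 ≤ j ∧ j < k then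
        v ⟨⟨j, h.1⟩, by simp [hT, Finset.mem_subtype, Finset.mem_Ico, h.1, h.2]⟩ else 0)
      with hψdef
    have hφ : Measurable φ := measurable_pi_apply _
    have hext : Measurable fun v : T → ℝ => (fun j => if h : 1 ≤ j ∧ j < k then
        v ⟨⟨j, h.1⟩, by simp [hT, Finset.mem_subtype, Finset.mem_Ico, h.1, h.2]⟩ else 0) := by
      apply measurable_pi_lambda
      intro j
      by_cases h : 1 ≤ j ∧ j < k
      · simp only [dif_pos h]; exact measurable_pi_apply _
      · simp only [dif_neg h]; exact measurable_const
    have hψ : Measurable ψ :=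
      (measurable_matrix (fun i j => Fseq_meas A Q N P1 k i j)).comp hext
    have hcomp := base.comp hφ hψ
    have hfeq : (φ ∘ fun a (i : ({⟨k, hk⟩} : Finset {j : ℕ // 1 ≤ j})) => γ i.1.1 a) = γ k := rfl
    have hgeq : (ψ ∘ fun a (i : T) => γ i.1.1 a) = P k := by
      funext ω
      simp only [Function.comp_apply, hψdef]
      rw [hfact k hk ω]
      exact Fseq_depends A Q N P1 k _ _ (fun j hj1 hj2 => by simp [hj1, hj2])
    rw [hfeq, hgeq] at hcomp
    exact hcomp
  -- expectation of γ k
  have hEγ : ∀ k, 1 ≤ k → ∫ ω, γ k ω ∂μ = p := fun k hk =>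
    integral_indicator_eq (hγmeas k hk) (hγval k hk) hp0 (hγbern k hk)
  have hγfin : ∀ k, 1 ≤ k → (Set.range (γ k)).Finite := by
    intro k hk
    refine ((Set.finite_singleton (1:ℝ)).insert 0).subset ?_
    rintro _ ⟨ω, rfl⟩
    rcases hγval k hk ω with h | h <;> simp [h]
  -- positive semidefiniteness of Pbar
  have hPbarPSD : ∀ k, 1 ≤ k → (Pbar k).PosSemidef := by
    intro k hk
    induction k, hk using Nat.le_induction with
    | base => rw [hPbarinit]; exact hP1.posSemidef
    | succ k hk ih =>
      rw [hPbarrec k hk]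
      have hopt := opt_identity ih A C hR
      set K : Matrix (Fin n) (Fin m) ℝ := -(A * Pbar k * Cᵀ * (C * Pbar k * Cᵀ + R)⁻¹) with hK
      rw [← comb_identity p (A * Pbar k * Aᵀ)
        (A * Pbar k * Cᵀ * (C * Pbar k * Cᵀ + R)⁻¹ * C * Pbar k * Aᵀ) Q, ← hopt]
      refine PosSemidef.add (psd_smul ?_ (by linarith)) (psd_smul ?_ hp0)
      · exact (Matrix.PosDef.posSemidef_add (psd_conj ih A) hQ).posSemidef
      · exact Matrix.PosDef.posSemidef_add ((psd_conj ih (A + K * C)).add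
          (psd_conj hR.posSemidef K)) hQ |>.posSemidef
  -- main induction
  intro k hk
  induction k, hk using Nat.le_induction with
  | base =>
    have hEP1 : (Matrix.of fun i j => ∫ ω, P 1 ω i j ∂μ) = P1 := by
      ext i j
      simp only [Matrix.of_apply, hPinit]
      rw [integral_const]
      simp
    rw [hPbarinit]
    rw [show (Matrix.of fun i j => ∫ ω, P 1 ω i j ∂μ) = P1 from hEP1, sub_self]
    exact Matrix.PosSemidef.zero
  | succ k hk ih =>
    set K : Matrix (Fin n) (Fin m) ℝ := -(A * Pbar k * Cᵀ * (C * Pbar k * Cᵀ + R)⁻¹) with hK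
    set q : Matrix (Fin n) (Fin n) ℝ → Matrix (Fin n) (Fin n) ℝ :=
      fun X => (A + K * C) * X * (A + K * C)ᵀ + K * R * Kᵀ + Q with hq
    set rr : Matrix (Fin n) (Fin n) ℝ → Matrix (Fin n) (Fin n) ℝ :=
      fun X => A * X * Aᵀ + Q with hrr
    set Z : Ω → Matrix (Fin n) (Fin n) ℝ :=
      fun ω => γ k ω • q (P k ω) + (1 - γ k ω) • rr (P k ω) with hZ
    -- entry measurability of q and rr as functions of the matrix
    have hqmeas : ∀ i j, Measurable fun X : Matrix (Fin n) (Fin n) ℝ => q X i j := by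
      intro i j
      have h1 := emeas_mul (f := fun X : Matrix (Fin n) (Fin n) ℝ => A + K * C)
        (g := fun X : Matrix (Fin n) (Fin n) ℝ => X) (fun _ _ => measurable_const)
        (fun i j => measurable_entry i j)
      have h2 := emeas_mul h1 (g := fun _ : Matrix (Fin n) (Fin n) ℝ => (A + K * C)ᵀ)
        (fun _ _ => measurable_const)
      simp only [hq, Matrix.add_apply]
      exact ((h2 i j).add measurable_const).add measurable_const
    have hrrmeas : ∀ i j, Measurable fun X : Matrix (Fin n) (Fin n) ℝ => rr X i j := by
      intro i j
      have h1 := emeas_mul (f := fun X : Matrix (Fin n) (Fin n) ℝ => A)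
        (g := fun X : Matrix (Fin n) (Fin n) ℝ => X) (fun _ _ => measurable_const)
        (fun i j => measurable_entry i j)
      have h2 := emeas_mul h1 (g := fun _ : Matrix (Fin n) (Fin n) ℝ => Aᵀ)
        (fun _ _ => measurable_const)
      simp only [hrr, Matrix.add_apply]
      exact (h2 i j).add measurable_const
    -- pointwise bound
    have hZpt : ∀ ω, (Z ω - P (k + 1) ω).PosSemidef := by
      intro ω
      rw [hPrec k hk ω]
      exact key_ineq' (hPD k hk ω) A Q C hR K (hγval k hk ω)
    -- integrability of entries of Z
    have hZmeasE : ∀ i j, Measurable fun ω => Z ω i j := by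
      intro i j
      simp only [hZ, Matrix.add_apply, Matrix.smul_apply, smul_eq_mul]
      exact ((hγmeas k hk).mul ((hqmeas i j).comp (hPmatmeas k hk))).add
        ((measurable_const.sub (hγmeas k hk)).mul ((hrrmeas i j).comp (hPmatmeas k hk)))
    have hZfin : (Set.range Z).Finite := by
      refine (Set.Finite.image2 (fun g X => g • q X + (1 - g) • rr X)
        (hγfin k hk) (hfin k hk)).subset ?_
      rintro _ ⟨ω, rfl⟩
      exact Set.mem_image2_of_mem (Set.mem_range_self ω) (Set.mem_range_self ω)
    have hZint : ∀ i j, Integrable (fun ω => Z ω i j) μ := by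
      intro i j
      refine integrable_of_finite_range (hZmeasE i j) ?_
      refine (hZfin.image (fun X => X i j)).subset ?_
      rintro _ ⟨ω, rfl⟩
      exact ⟨Z ω, Set.mem_range_self ω, rfl⟩
    -- step C : E Z ⪰ EP (k+1)
    have hstepC : ((Matrix.of fun i j => ∫ ω, Z ω i j ∂μ) - EP (k + 1)).PosSemidef :=
      integral_psd hZpt (hPint (k + 1) (le_add_right hk) ) hZint
    -- step D : E Z = (1-p) • rr (EP k) + p • q (EP k)
    have hQr : (Matrix.of fun i j => ∫ ω, rr (P k ω) i j ∂μ) = rr (EP k) := by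
      simp only [hrr]
      exact integral_affine A Aᵀ Q (hPint k hk)
    have hQq : (Matrix.of fun i j => ∫ ω, q (P k ω) i j ∂μ) = q (EP k) := by
      have e4 : ∀ X : Matrix (Fin n) (Fin n) ℝ,
          q X = (A + K * C) * X * (A + K * C)ᵀ + (K * R * Kᵀ + Q) := by
        intro X; simp only [hq]; rw [add_assoc]
      simp only [e4]
      exact integral_affine (A + K * C) (A + K * C)ᵀ (K * R * Kᵀ + Q) (hPint k hk)
    have hstepD : (Matrix.of fun i j => ∫ ω, Z ω i j ∂μ)
        = (1 - p) • rr (EP k) + p • q (EP k) := by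
      ext i j
      have e3 : ∀ ω, Z ω i j
          = rr (P k ω) i j + γ k ω * (q (P k ω) i j - rr (P k ω) i j) := by
        intro ω
        simp only [hZ, Matrix.add_apply, Matrix.smul_apply, smul_eq_mul]
        ring
      have hintrr : Integrable (fun ω => rr (P k ω) i j) μ :=
        hcompInt k hk _ (hrrmeas i j)
      have hintq : Integrable (fun ω => q (P k ω) i j) μ :=
        hcompInt k hk _ (hqmeas i j)
      have hintw : Integrable (fun ω => q (P k ω) i j - rr (P k ω) i j) μ :=
        hintq.sub hintrr
      have hγint : Integrable (γ k) μ :=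
        integrable_of_finite_range (hγmeas k hk) (hγfin k hk)
      have hindw : IndepFun (γ k) (fun ω => q (P k ω) i j - rr (P k ω) i j) μ := by
        have := (hind k hk).comp measurable_id
          (((hqmeas i j).sub (hrrmeas i j)) :
            Measurable fun X : Matrix (Fin n) (Fin n) ℝ => q X i j - rr X i j)
        exact this
      have hintγw : Integrable (fun ω => γ k ω * (q (P k ω) i j - rr (P k ω) i j)) μ :=
        hindw.integrable_mul hγint hintw
      have hmul := hindw.integral_mul_eq_mul_integral hγint.aestronglyMeasurable hintw.aestronglyMeasurable
      simp only [Matrix.of_apply, e3]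
      rw [integral_add hintrr hintγw]
      have : ∫ ω, γ k ω * (q (P k ω) i j - rr (P k ω) i j) ∂μ
          = p * (q (EP k) i j - rr (EP k) i j) := by
        have e5 : (fun ω => γ k ω * (q (P k ω) i j - rr (P k ω) i j))
            = γ k * fun ω => q (P k ω) i j - rr (P k ω) i j := rfl
        rw [e5, hmul, hEγ k hk]
        congr 1
        rw [integral_sub hintq hintrr]
        have h1 : ∫ ω, q (P k ω) i j ∂μ = q (EP k) i j := by
          rw [← hQq]; rfl
        have h2 : ∫ ω, rr (P k ω) i j ∂μ = rr (EP k) i j := by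
          rw [← hQr]; rfl
        rw [h1, h2]
      rw [this]
      have h2 : ∫ ω, rr (P k ω) i j ∂μ = rr (EP k) i j := by
        rw [← hQr]; rfl
      rw [h2]
      simp only [Matrix.add_apply, Matrix.smul_apply, smul_eq_mul]
      ring
    -- step E : monotonicity
    have hstepE := mono_step hp0 hp1 A Q C R K (E := EP k) (Y := Pbar k) ih
    -- step F : optimum identity
    have hstepF : (1 - p) • (A * Pbar k * Aᵀ + Q) + p • q (Pbar k) = Pbar (k + 1) := by
      rw [hPbarrec k hk]
      have hopt := opt_identity (hPbarPSD k hk) A C hR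
      rw [← hK] at hopt
      simp only [hq]
      rw [hopt]
      exact comb_identity p (A * Pbar k * Aᵀ)
        (A * Pbar k * Cᵀ * (C * Pbar k * Cᵀ + R)⁻¹ * C * Pbar k * Aᵀ) Q
    -- assemble
    have hPE : (Pbar (k + 1) - (Matrix.of fun i j => ∫ ω, Z ω i j ∂μ)).PosSemidef := by
      rw [hstepD, ← hstepF]
      exact hstepE
    exact psd_sub_trans hstepC hPE
end
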